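/- arXiv:1607.03746 — 6 statements merged into one kernel-verified Lean document; each statement's English description precedes it below -/
import Mathlib

section
/- For every integer n ≥ 0, every integer r ≥ 1, all integers k_1,…,k_r, all positive reals a, b, c with ab > 1, every real x, and every integer s ≥ 1, the generalized multi poly-Bernoulli polynomials satisfy B_n^{(k_1,…,k_r)}(x;a,b,c) = ∑_{m=0}^{n} C(n,m) ∑_{l=0}^{n−m} [C(n−m,l)/C(l+s,l)] · S(l+s,s) · B_{n−m−l}^{(k_1,…,k_r)}(0;a,b) · B_m^{(s)}(x·r·ln c), where S denotes the Stirling number of the second kind and B_m^{(s)}(y) are the Bernoulli polynomials of order s defined by (t/(e^t−1))^s e^{yt} = ∑_{m≥0} B_m^{(s)}(y) t^m/m!. -/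
open Nat Finset

/-- The multiple polylogarithm. -/
noncomputable def multiPolylog (r : ℕ) (k : Fin r → ℤ) (z : ℝ) : ℝ :=
  ∑' m : Fin r → ℕ, if StrictMono m ∧ ∀ i, 0 < m i then
    z ^ (Finset.univ.sup m) / ∏ j, ((m j : ℝ) ^ (k j)) else 0

/-- Stirling numbers of the second kind. -/
def stirling2 : ℕ → ℕ → ℕ
  | 0, 0 => 1
  | 0, _ + 1 => 0
  | _ + 1, 0 => 0
  | n + 1, k + 1 => (k + 1) * stirling2 n (k + 1) + stirling2 n k

/-- From summability at `t₀`, absolute summability at smaller `|t|`. -/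
lemma aux_summable_norm {c : ℕ → ℝ} {t₀ : ℝ} (h : Summable fun n => c n * t₀ ^ n)
    {t : ℝ} (ht : |t| < |t₀|) : Summable fun n => ‖c n * t ^ n‖ := by
  have ht₀ : 0 < |t₀| := lt_of_le_of_lt (abs_nonneg t) ht
  obtain ⟨M, hM⟩ := (h.tendsto_atTop_zero.norm).bddAbove_range
  rw [mem_upperBounds] at hM
  have hMb : ∀ n, ‖c n * t₀ ^ n‖ ≤ M := fun n => hM _ ⟨n, rfl⟩
  set q : ℝ := |t| / |t₀| with hq
  have hq0 : 0 ≤ q := div_nonneg (abs_nonneg t) ht₀.le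
  have hq1 : q < 1 := (div_lt_one ht₀).2 ht
  refine Summable.of_nonneg_of_le (fun n => norm_nonneg _) (fun n => ?_)
    ((summable_geometric_of_lt_one hq0 hq1).mul_left M)
  have : ‖c n * t ^ n‖ = ‖c n * t₀ ^ n‖ * q ^ n := by
    rw [hq, div_pow, norm_mul, norm_mul, norm_pow, norm_pow]
    rw [Real.norm_eq_abs, Real.norm_eq_abs, Real.norm_eq_abs]
    field_simp
  rw [this]
  exact mul_le_mul_of_nonneg_right (hMb n) (pow_nonneg hq0 n)

lemma aux_key (c : ℕ → ℝ) (t₀ : ℝ) (ht₀pos : 0 < t₀) (M : ℝ)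
    (hMb : ∀ k, |c k * t₀ ^ k| ≤ M + 1)
    (t : ℝ) (htpos : 0 < t) (htle : t ≤ t₀ / 2)
    (h1 : HasSum (fun k => c (k + 1) * t ^ (k + 1)) (-c 0)) :
    |c 0| ≤ 2 * (M + 1) * (t / t₀) := by
  have hM1 : 0 ≤ M + 1 := le_trans (abs_nonneg _) (hMb 0)
  set q : ℝ := t / t₀ with hqdef
  have hq0 : 0 < q := div_pos htpos ht₀pos
  have hqhalf : q ≤ 1 / 2 := by
    rw [hqdef, div_le_div_iff₀ ht₀pos (by norm_num)]; linarith
  have hq1 : q < 1 := lt_of_le_of_lt hqhalf (by norm_num)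
  have hbound : ∀ k, ‖c (k + 1) * t ^ (k + 1)‖ ≤ (M + 1) * q ^ (k + 1) := by
    intro k
    have h2 : |c (k + 1) * t ^ (k + 1)| = |c (k + 1) * t₀ ^ (k + 1)| * q ^ (k + 1) := by
      rw [hqdef, div_pow, abs_mul, abs_mul, abs_pow, abs_pow,
        abs_of_pos htpos, abs_of_pos ht₀pos]
      field_simp
    rw [Real.norm_eq_abs, h2]
    exact mul_le_mul_of_nonneg_right (hMb _) (pow_nonneg hq0.le _)
  have hgs : Summable (fun k => (M + 1) * q ^ (k + 1)) := by
    have := (summable_geometric_of_lt_one hq0.le hq1).mul_left ((M + 1) * q)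
    refine this.congr (fun k => ?_)
    rw [pow_succ]; ring
  have hns : Summable (fun k => ‖c (k + 1) * t ^ (k + 1)‖) :=
    Summable.of_nonneg_of_le (fun k => norm_nonneg _) hbound hgs
  have h3 : |c 0| = ‖∑' k, c (k + 1) * t ^ (k + 1)‖ := by
    rw [h1.tsum_eq]; simp
  have h4 : ‖∑' k, c (k + 1) * t ^ (k + 1)‖ ≤ ∑' k, ‖c (k + 1) * t ^ (k + 1)‖ :=
    norm_tsum_le_tsum_norm hns
  have h5 : ∑' k, ‖c (k + 1) * t ^ (k + 1)‖ ≤ ∑' k, (M + 1) * q ^ (k + 1) :=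
    Summable.tsum_le_tsum hbound hns hgs
  have h6 : ∑' k, (M + 1) * q ^ (k + 1) = (M + 1) * q * (1 - q)⁻¹ := by
    have he : (fun k => (M + 1) * q ^ (k + 1)) = fun k => ((M + 1) * q) * q ^ k := by
      funext k; rw [pow_succ]; ring
    rw [he, tsum_mul_left, tsum_geometric_of_lt_one hq0.le hq1]
  have h7 : (1 - q)⁻¹ ≤ 2 := by
    rw [inv_le_comm₀ (by linarith) (by norm_num)]; linarith
  calc |c 0| ≤ (M + 1) * q * (1 - q)⁻¹ := by rw [h3]; rw [h6] at h5; linarith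
    _ ≤ (M + 1) * q * 2 := by
        apply mul_le_mul_of_nonneg_left h7; positivity
    _ = 2 * (M + 1) * q := by ring

lemma aux_c0 (c : ℕ → ℝ) (ε : ℝ) (hε : 0 < ε)
    (h : ∀ t : ℝ, t ≠ 0 → |t| < ε → HasSum (fun k => c k * t ^ k) 0) : c 0 = 0 := by
  have ht₀pos : 0 < ε / 2 := by positivity
  have ht₀lt : |ε / 2| < ε := by rw [abs_of_pos ht₀pos]; linarith
  have hsum := (h (ε / 2) (ne_of_gt ht₀pos) ht₀lt).summable
  obtain ⟨M, hM⟩ := (hsum.tendsto_atTop_zero.norm).bddAbove_range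
  rw [mem_upperBounds] at hM
  have hMb : ∀ k, |c k * (ε / 2) ^ k| ≤ M + 1 := by
    intro k
    have h' : ‖c k * (ε / 2) ^ k‖ ≤ M := hM _ ⟨k, rfl⟩
    rw [Real.norm_eq_abs] at h'
    linarith
  have hM1 : (0:ℝ) < M + 1 := by
    have hM0 : (0:ℝ) ≤ M := le_trans (norm_nonneg (c 0 * (ε / 2) ^ 0)) (hM _ ⟨0, rfl⟩)
    linarith
  have key : ∀ t : ℝ, 0 < t → t ≤ ε / 2 / 2 → |c 0| ≤ 2 * (M + 1) * (t / (ε / 2)) := by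
    intro t htpos htle
    have htlt : |t| < ε := by rw [abs_of_pos htpos]; linarith
    have h1 : HasSum (fun k => c (k + 1) * t ^ (k + 1)) (0 - ∑ i ∈ range 1, c i * t ^ i) :=
      (hasSum_nat_add_iff' 1).2 (h t (ne_of_gt htpos) htlt)
    simp only [range_one, sum_singleton, pow_zero, mul_one, zero_sub] at h1
    exact aux_key c (ε / 2) ht₀pos M hMb t htpos htle h1
  have habs : |c 0| ≤ 0 := by
    refine le_of_forall_pos_le_add (fun δ hδ => ?_)
    set t : ℝ := min (ε / 2 / 2) (ε / 2 * δ / (2 * (M + 1))) with htdef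
    have htpos : 0 < t := lt_min (by positivity) (by positivity)
    have h8 := key t htpos (min_le_left _ _)
    have hle : t ≤ ε / 2 * δ / (2 * (M + 1)) := min_le_right _ _
    have h10 : t * (2 * (M + 1)) ≤ ε / 2 * δ := by
      rw [le_div_iff₀ (by positivity : (0:ℝ) < 2 * (M + 1))] at hle
      linarith
    have h9 : 2 * (M + 1) * (t / (ε / 2)) ≤ δ := by
      have : 2 * (M + 1) * (t / (ε / 2)) = t * (2 * (M + 1)) / (ε / 2) := by ring
      rw [this, div_le_iff₀ ht₀pos]
      nlinarith
    linarith
  exact abs_eq_zero.1 (le_antisymm habs (abs_nonneg _))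

lemma aux_coeff_zero : ∀ (n : ℕ) (c : ℕ → ℝ) (ε : ℝ), 0 < ε →
    (∀ t : ℝ, t ≠ 0 → |t| < ε → HasSum (fun k => c k * t ^ k) 0) → c n = 0 := by
  intro n
  induction n with
  | zero => exact fun c ε hε h => aux_c0 c ε hε h
  | succ n ih =>
    intro c ε hε h
    have h0 : c 0 = 0 := aux_c0 c ε hε h
    refine ih (fun k => c (k + 1)) ε hε (fun t ht htε => ?_)
    have h1 : HasSum (fun k => c (k + 1) * t ^ (k + 1)) (0 - ∑ i ∈ range 1, c i * t ^ i) :=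
      (hasSum_nat_add_iff' 1).2 (h t ht htε)
    simp only [range_one, sum_singleton, pow_zero, mul_one, zero_sub, h0, neg_zero] at h1
    have h2 := h1.div_const t
    simp only [zero_div] at h2
    have h3 : (fun k => c (k + 1) * t ^ (k + 1) / t) = fun k => c (k + 1) * t ^ k := by
      funext k; rw [pow_succ]; field_simp
    rwa [h3] at h2

/-- The alternating sum `(-1)^s * ∑_j (-1)^j C(s,j) j^n`. -/
noncomputable def altA (n s : ℕ) : ℝ :=
  (-1 : ℝ) ^ s * ∑ j ∈ range (s + 1), (-1 : ℝ) ^ j * (s.choose j : ℝ) * (j : ℝ) ^ n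

lemma stirling2_eq_zero : ∀ (n s : ℕ), n < s → stirling2 n s = 0 := by
  intro n
  induction n with
  | zero => intro s hs; cases s with
    | zero => omega
    | succ s => rfl
  | succ n ih =>
    intro s hs
    cases s with
    | zero => omega
    | succ s =>
      show (s + 1) * stirling2 n (s + 1) + stirling2 n s = 0
      rw [ih (s + 1) (by omega), ih s (by omega)]
      ring

lemma choose_key (s j : ℕ) :
    (j : ℝ) * ((s + 1).choose j : ℝ) = (s + 1 : ℝ) * (((s + 1).choose j : ℝ) - (s.choose j : ℝ)) := by
  rcases j with _ | i
  · simp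
  · have h1 : (s + 1) * s.choose i = (s + 1).choose (i + 1) * (i + 1) :=
      Nat.add_one_mul_choose_eq s i
    have h2 : (s + 1).choose (i + 1) = s.choose i + s.choose (i + 1) :=
      Nat.choose_succ_succ s i
    have h1' : ((s:ℝ) + 1) * (s.choose i : ℝ) = ((s + 1).choose (i + 1) : ℝ) * ((i:ℝ) + 1) := by
      exact_mod_cast h1
    have h2' : ((s + 1).choose (i + 1) : ℝ) = (s.choose i : ℝ) + (s.choose (i + 1) : ℝ) := by
      exact_mod_cast h2
    push_cast
    nlinarith [h1', h2']

lemma altA_rec (n s : ℕ) : altA (n + 1) (s + 1) = (s + 1 : ℝ) * (altA n (s + 1) + altA n s) := by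
  unfold altA
  have key : ∑ j ∈ range (s + 2), (-1 : ℝ) ^ j * ((s + 1).choose j : ℝ) * (j : ℝ) ^ (n + 1)
      = (s + 1 : ℝ) * (∑ j ∈ range (s + 2), (-1 : ℝ) ^ j * ((s + 1).choose j : ℝ) * (j : ℝ) ^ n
        - ∑ j ∈ range (s + 2), (-1 : ℝ) ^ j * (s.choose j : ℝ) * (j : ℝ) ^ n) := by
    rw [← Finset.sum_sub_distrib, Finset.mul_sum]
    refine Finset.sum_congr rfl (fun j _ => ?_)
    have := choose_key s j
    calc (-1 : ℝ) ^ j * ((s + 1).choose j : ℝ) * (j : ℝ) ^ (n + 1)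
        = (-1 : ℝ) ^ j * ((j : ℝ) * ((s + 1).choose j : ℝ)) * (j : ℝ) ^ n := by ring
      _ = (-1 : ℝ) ^ j * ((s + 1 : ℝ) * (((s + 1).choose j : ℝ) - (s.choose j : ℝ))) * (j : ℝ) ^ n := by
          rw [this]
      _ = (s + 1 : ℝ) * ((-1 : ℝ) ^ j * ((s + 1).choose j : ℝ) * (j : ℝ) ^ n
            - (-1 : ℝ) ^ j * (s.choose j : ℝ) * (j : ℝ) ^ n) := by ring
  have htrunc : ∑ j ∈ range (s + 2), (-1 : ℝ) ^ j * (s.choose j : ℝ) * (j : ℝ) ^ n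
      = ∑ j ∈ range (s + 1), (-1 : ℝ) ^ j * (s.choose j : ℝ) * (j : ℝ) ^ n := by
    rw [Finset.sum_range_succ]
    simp [Nat.choose_succ_self]
  rw [key, htrunc]
  have hpow : (-1 : ℝ) ^ (s + 1) = -(-1 : ℝ) ^ s := by rw [pow_succ]; ring
  rw [hpow]
  ring

lemma altA_eq : ∀ (n s : ℕ), altA n s = (s ! : ℝ) * (stirling2 n s : ℝ) := by
  intro n
  induction n with
  | zero =>
    intro s
    cases s with
    | zero => simp [altA, stirling2]
    | succ s =>
      show altA 0 (s + 1) = _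
      have h0 : stirling2 0 (s + 1) = 0 := rfl
      rw [h0]
      unfold altA
      have : ∑ j ∈ range (s + 2), (-1 : ℝ) ^ j * ((s + 1).choose j : ℝ) * (j : ℝ) ^ 0
          = ∑ j ∈ range (s + 2), (-1 : ℝ) ^ j * ((s + 1).choose j : ℝ) := by
        refine Finset.sum_congr rfl (fun j _ => by rw [pow_zero, mul_one])
      rw [this]
      have h1 := Int.alternating_sum_range_choose (n := s + 1)
      have h2 : ((∑ i ∈ range (s + 2), (-1 : ℤ) ^ i * ((s + 1).choose i : ℤ) : ℤ) : ℝ)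
          = ∑ j ∈ range (s + 2), (-1 : ℝ) ^ j * ((s + 1).choose j : ℝ) := by
        push_cast
        rfl
      rw [h1] at h2
      simp at h2
      rw [← h2]
      simp
  | succ n ih =>
    intro s
    cases s with
    | zero =>
      have h0 : stirling2 (n + 1) 0 = 0 := rfl
      rw [h0]
      unfold altA
      simp
    | succ s =>
      rw [altA_rec n s, ih (s + 1), ih s]
      have h0 : stirling2 (n + 1) (s + 1) = (s + 1) * stirling2 n (s + 1) + stirling2 n s := rfl
      rw [h0]
      push_cast [Nat.factorial_succ]
      ring

lemma neg_one_pow_sub {s j : ℕ} (h : j ≤ s) : (-1 : ℝ) ^ (s - j) = (-1 : ℝ) ^ s * (-1 : ℝ) ^ j := by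
  obtain ⟨k, rfl⟩ := Nat.exists_eq_add_of_le h
  rw [Nat.add_sub_cancel_left]
  calc (-1 : ℝ) ^ k = (((-1 : ℝ) * (-1)) ^ j) * (-1) ^ k := by norm_num
    _ = ((-1 : ℝ) ^ j * (-1) ^ j) * (-1) ^ k := by rw [mul_pow]
    _ = (-1 : ℝ) ^ (j + k) * (-1) ^ j := by rw [pow_add]; ring

lemma hasSum_exp_real (x : ℝ) : HasSum (fun n => x ^ n / (n ! : ℝ)) (Real.exp x) := by
  rw [Real.exp_eq_exp_ℝ]
  exact NormedSpace.expSeries_div_hasSum_exp x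

lemma hasSum_expm1_pow (s : ℕ) (t : ℝ) :
    HasSum (fun n => altA n s * t ^ n / (n ! : ℝ)) ((Real.exp t - 1) ^ s) := by
  have hj : ∀ j ∈ range (s + 1),
      HasSum (fun n => ((-1 : ℝ) ^ (s - j) * (s.choose j : ℝ)) * (((j : ℝ) * t) ^ n / n !))
        ((Real.exp t) ^ j * ((-1 : ℝ) ^ (s - j) * (s.choose j : ℝ))) := by
    intro j _
    have h1 := (hasSum_exp_real ((j : ℝ) * t)).mul_left ((-1 : ℝ) ^ (s - j) * (s.choose j : ℝ))
    have h2 : Real.exp ((j : ℝ) * t) = (Real.exp t) ^ j := Real.exp_nat_mul t j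
    rw [h2] at h1
    rw [mul_comm (Real.exp t ^ j)]
    exact h1
  have hsum := hasSum_sum hj
  have hval : ∑ j ∈ range (s + 1), (Real.exp t) ^ j * ((-1 : ℝ) ^ (s - j) * (s.choose j : ℝ))
      = (Real.exp t - 1) ^ s := by
    rw [sub_eq_add_neg, add_pow]
    refine Finset.sum_congr rfl (fun j _ => ?_)
    ring
  rw [hval] at hsum
  have hfun : (fun n => ∑ j ∈ range (s + 1),
      ((-1 : ℝ) ^ (s - j) * (s.choose j : ℝ)) * (((j : ℝ) * t) ^ n / n !))
      = fun n => altA n s * t ^ n / (n ! : ℝ) := by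
    funext n
    unfold altA
    rw [Finset.mul_sum, Finset.sum_mul, Finset.sum_div]
    refine Finset.sum_congr rfl (fun j hj => ?_)
    rw [neg_one_pow_sub (Finset.mem_range_succ_iff.1 hj), mul_pow]
    ring
  rwa [hfun] at hsum

lemma hasSum_H (s : ℕ) (t : ℝ) (ht : t ≠ 0) :
    HasSum (fun l => (s ! : ℝ) * (stirling2 (l + s) s : ℝ) * t ^ l / ((l + s)! : ℝ))
      ((Real.exp t - 1) ^ s / t ^ s) := by
  have h := hasSum_expm1_pow s t
  have h1 : HasSum (fun l => altA (l + s) s * t ^ (l + s) / ((l + s)! : ℝ))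
      ((Real.exp t - 1) ^ s - ∑ i ∈ range s, altA i s * t ^ i / (i ! : ℝ)) :=
    (hasSum_nat_add_iff' s).2 h
  have hzero : ∑ i ∈ range s, altA i s * t ^ i / (i ! : ℝ) = 0 := by
    refine Finset.sum_eq_zero (fun i hi => ?_)
    rw [altA_eq, stirling2_eq_zero i s (Finset.mem_range.1 hi)]
    simp
  rw [hzero, sub_zero] at h1
  have h2 := h1.div_const (t ^ s)
  have hfun : (fun l => altA (l + s) s * t ^ (l + s) / ((l + s)! : ℝ) / t ^ s)
      = fun l => (s ! : ℝ) * (stirling2 (l + s) s : ℝ) * t ^ l / ((l + s)! : ℝ) := by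
    funext l
    rw [altA_eq, pow_add]
    have hts : (t : ℝ) ^ s ≠ 0 := pow_ne_zero s ht
    field_simp
  rwa [hfun] at h2

/-- expression of the generalized multi poly-Bernoulli polynomials in terms of
Bernoulli polynomials of order `s` and Stirling numbers of the second kind. -/
theorem statement1
    (r : ℕ) (hr : 1 ≤ r) (k : Fin r → ℤ)
    (a b : ℝ) (ha : 0 < a) (hb : 0 < b) (hab : 1 < a * b)
    (B : ℝ → ℝ → ℕ → ℝ)
    (hB : ∀ c : ℝ, 0 < c → ∀ x : ℝ, ∃ ε > 0, ∀ t : ℝ, t ≠ 0 → |t| < ε →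
      HasSum (fun n : ℕ => B c x n * t ^ n / (n ! : ℝ))
        (multiPolylog r k (1 - (a * b) ^ (-t)) / (b ^ t - a ^ (-t)) ^ r *
          c ^ ((r : ℝ) * x * t)))
    (s : ℕ) (hs : 1 ≤ s)
    (Bs : ℝ → ℕ → ℝ)
    (hBs : ∀ y : ℝ, ∃ ε > 0, ∀ t : ℝ, t ≠ 0 → |t| < ε →
      HasSum (fun m : ℕ => Bs y m * t ^ m / (m ! : ℝ))
        ((t / (Real.exp t - 1)) ^ s * Real.exp (y * t)))
    (c : ℝ) (hc : 0 < c) (x : ℝ) (n : ℕ) :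
    B c x n = ∑ m ∈ Finset.range (n + 1), (n.choose m : ℝ) *
      ∑ l ∈ Finset.range (n - m + 1),
        (((n - m).choose l : ℝ) / ((l + s).choose l : ℝ)) * (stirling2 (l + s) s : ℝ) *
          B (Real.exp 1) 0 (n - m - l) * Bs (x * (r : ℝ) * Real.log c) m := by
  set y : ℝ := x * (r : ℝ) * Real.log c with hy
  obtain ⟨ε₁, hε₁, hG0⟩ := hB (Real.exp 1) (Real.exp_pos 1) 0
  obtain ⟨ε₂, hε₂, hP0⟩ := hBs y
  obtain ⟨ε₃, hε₃, hF0⟩ := hB c hc x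
  set G : ℕ → ℝ := fun u => B (Real.exp 1) 0 u / u ! with hG
  set H : ℕ → ℝ := fun v => (s ! : ℝ) * (stirling2 (v + s) s : ℝ) / ((v + s)! : ℝ) with hH
  set P : ℕ → ℝ := fun m => Bs y m / m ! with hP
  set Q : ℕ → ℝ := fun N =>
    ∑ i ∈ range (N + 1), (∑ u ∈ range (i + 1), G u * H (i - u)) * P (N - i) with hQ
  set ε : ℝ := min ε₁ (min ε₂ ε₃) with hε
  have hεpos : 0 < ε := lt_min hε₁ (lt_min hε₂ hε₃)
  -- The key coefficient identity, via uniqueness of power series coefficients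
  have key : ∀ N : ℕ, B c x N / (N ! : ℝ) - Q N = 0 := by
    intro N
    refine aux_coeff_zero N (fun j => B c x j / (j ! : ℝ) - Q j) ε hεpos (fun t ht htε => ?_)
    have htε₁ : |t| < ε₁ := lt_of_lt_of_le htε (min_le_left _ _)
    have htε₂ : |t| < ε₂ := lt_of_lt_of_le htε ((min_le_right _ _).trans (min_le_left _ _))
    have htε₃ : |t| < ε₃ := lt_of_lt_of_le htε ((min_le_right _ _).trans (min_le_right _ _))
    set valG : ℝ := multiPolylog r k (1 - (a * b) ^ (-t)) / (b ^ t - a ^ (-t)) ^ r with hvalG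
    -- series for B c x
    have hcr : c ^ ((r : ℝ) * x * t) = Real.exp (y * t) := by
      rw [Real.rpow_def_of_pos hc]
      congr 1
      rw [hy]; ring
    have hFt : HasSum (fun N => B c x N * t ^ N / (N ! : ℝ)) (valG * Real.exp (y * t)) := by
      have := hF0 t ht htε₃
      rwa [hcr] at this
    -- series for B (exp 1) 0
    have hGt : HasSum (fun u => G u * t ^ u) valG := by
      have h1 := hG0 t ht htε₁
      simp only [mul_zero, zero_mul, Real.rpow_zero, mul_one] at h1
      have hfun : (fun u => B (Real.exp 1) 0 u * t ^ u / (u ! : ℝ)) = fun u => G u * t ^ u := by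
        funext u; rw [hG]; ring
      rwa [hfun] at h1
    -- series for Bernoulli of order s
    have hPt : HasSum (fun m => P m * t ^ m) ((t / (Real.exp t - 1)) ^ s * Real.exp (y * t)) := by
      have h1 := hP0 t ht htε₂
      have hfun : (fun m => Bs y m * t ^ m / (m ! : ℝ)) = fun m => P m * t ^ m := by
        funext m; rw [hP]; ring
      rwa [hfun] at h1
    -- series for ((e^t-1)/t)^s
    have hHt : HasSum (fun v => H v * t ^ v) ((Real.exp t - 1) ^ s / t ^ s) := by
      have h1 := hasSum_H s t ht
      have hfun : (fun v => (s ! : ℝ) * (stirling2 (v + s) s : ℝ) * t ^ v / ((v + s)! : ℝ))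
          = fun v => H v * t ^ v := by
        funext v; rw [hH]; ring
      rwa [hfun] at h1
    -- norm summability at radius t₀
    set t₀ : ℝ := (|t| + ε) / 2 with ht₀
    have ht₀pos : 0 < t₀ := by
      have := abs_nonneg t
      rw [ht₀]; linarith
    have habs : |t| < |t₀| := by rw [abs_of_pos ht₀pos, ht₀]; linarith
    have ht₀ε : |t₀| < ε := by rw [abs_of_pos ht₀pos, ht₀]; linarith
    have ht₀ne : t₀ ≠ 0 := ne_of_gt ht₀pos
    have sG : Summable fun u => ‖G u * t ^ u‖ := by
      refine aux_summable_norm ?_ habs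
      have h1 := (hG0 t₀ ht₀ne (lt_of_lt_of_le ht₀ε (min_le_left _ _))).summable
      refine h1.congr (fun u => ?_)
      rw [hG]; ring
    have sP : Summable fun m => ‖P m * t ^ m‖ := by
      refine aux_summable_norm ?_ habs
      have h1 := (hP0 t₀ ht₀ne (lt_of_lt_of_le ht₀ε
        ((min_le_right _ _).trans (min_le_left _ _)))).summable
      refine h1.congr (fun m => ?_)
      rw [hP]; ring
    have sH : Summable fun v => ‖H v * t ^ v‖ := by
      refine aux_summable_norm ?_ habs
      have h1 := (hasSum_H s t₀ ht₀ne).summable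
      refine h1.congr (fun v => ?_)
      rw [hH]; ring
    -- Cauchy products
    have hGH := hasSum_sum_range_mul_of_summable_norm sG sH
    rw [hGt.tsum_eq, hHt.tsum_eq] at hGH
    have sGH := summable_norm_sum_mul_range_of_summable_norm sG sH
    have hQ3 := hasSum_sum_range_mul_of_summable_norm sGH sP
    rw [hGH.tsum_eq, hPt.tsum_eq] at hQ3
    -- value of the triple product
    have hexpne : Real.exp t - 1 ≠ 0 := by
      refine sub_ne_zero.2 (fun hcontra => ht ?_)
      have h1 := congrArg Real.log hcontra
      rwa [Real.log_exp, Real.log_one] at h1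
    have hval : valG * ((Real.exp t - 1) ^ s / t ^ s) *
        ((t / (Real.exp t - 1)) ^ s * Real.exp (y * t)) = valG * Real.exp (y * t) := by
      have h1 : (t : ℝ) ^ s ≠ 0 := pow_ne_zero _ ht
      have h2 : (Real.exp t - 1) ^ s ≠ 0 := pow_ne_zero _ hexpne
      rw [div_pow]
      field_simp
    rw [hval] at hQ3
    -- identify the triple product coefficients with Q N * t^N
    have hfunQ : (fun N => ∑ i ∈ range (N + 1),
        (∑ u ∈ range (i + 1), (G u * t ^ u) * (H (i - u) * t ^ (i - u))) * (P (N - i) * t ^ (N - i)))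
        = fun N => Q N * t ^ N := by
      funext N
      rw [hQ, Finset.sum_mul]
      refine Finset.sum_congr rfl (fun i hi => ?_)
      have hiN : i ≤ N := Finset.mem_range_succ_iff.1 hi
      rw [Finset.sum_mul, Finset.sum_mul, Finset.sum_mul]
      refine Finset.sum_congr rfl (fun u hu => ?_)
      have hui : u ≤ i := Finset.mem_range_succ_iff.1 hu
      have e1 : t ^ u * t ^ (i - u) = t ^ i := by
        rw [← pow_add, Nat.add_sub_cancel' hui]
      have e2 : t ^ i * t ^ (N - i) = t ^ N := by
        rw [← pow_add, Nat.add_sub_cancel' hiN]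
      calc (G u * t ^ u) * (H (i - u) * t ^ (i - u)) * (P (N - i) * t ^ (N - i))
          = G u * H (i - u) * P (N - i) * (t ^ u * t ^ (i - u) * t ^ (N - i)) := by ring
        _ = G u * H (i - u) * P (N - i) * (t ^ i * t ^ (N - i)) := by rw [e1]
        _ = G u * H (i - u) * P (N - i) * t ^ N := by rw [e2]
    rw [hfunQ] at hQ3
    -- subtract
    have hdiff := hFt.sub hQ3
    rw [sub_self] at hdiff
    have hfunD : (fun N => B c x N * t ^ N / (N ! : ℝ) - Q N * t ^ N)
        = fun N => (B c x N / (N ! : ℝ) - Q N) * t ^ N := by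
      funext N; ring
    rwa [hfunD] at hdiff
  -- now conclude
  have hBQ : B c x n = (n ! : ℝ) * Q n := by
    have := key n
    have hne : (n ! : ℝ) ≠ 0 := Nat.cast_ne_zero.2 (Nat.factorial_ne_zero n)
    field_simp at this ⊢
    linarith
  rw [hBQ]
  -- reindex Q by reflections
  have hQrefl : Q n = ∑ m ∈ range (n + 1), (∑ l ∈ range (n - m + 1), G (n - m - l) * H l) * P m := by
    simp only [hQ]
    rw [← Finset.sum_range_reflect
      (fun i => (∑ u ∈ range (i + 1), G u * H (i - u)) * P (n - i)) (n + 1)]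
    refine Finset.sum_congr rfl (fun m hm => ?_)
    have hmn : m ≤ n := Finset.mem_range_succ_iff.1 hm
    have h1 : n + 1 - 1 - m = n - m := by omega
    have h2 : n - (n - m) = m := Nat.sub_sub_self hmn
    rw [h1, h2]
    congr 1
    rw [← Finset.sum_range_reflect (fun u => G u * H (n - m - u)) (n - m + 1)]
    refine Finset.sum_congr rfl (fun l hl => ?_)
    have hln : l ≤ n - m := Finset.mem_range_succ_iff.1 hl
    have h3 : n - m + 1 - 1 - l = n - m - l := by omega
    have h4 : n - m - (n - m - l) = l := Nat.sub_sub_self hln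
    rw [h3, h4]
  rw [hQrefl, Finset.mul_sum]
  refine Finset.sum_congr rfl (fun m hm => ?_)
  have hmn : m ≤ n := Finset.mem_range_succ_iff.1 hm
  rw [Finset.sum_mul, Finset.mul_sum, Finset.mul_sum]
  refine Finset.sum_congr rfl (fun l hl => ?_)
  have hln : l ≤ n - m := Finset.mem_range_succ_iff.1 hl
  -- coefficient identity
  have e1 : (n ! : ℝ) = (n.choose m : ℝ) * (m ! : ℝ) *
      ((n - m).choose l : ℝ) * (l ! : ℝ) * ((n - m - l)! : ℝ) := by
    have c1 : n.choose m * m ! * (n - m)! = n ! := Nat.choose_mul_factorial_mul_factorial hmn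
    have c2 : (n - m).choose l * l ! * (n - m - l)! = (n - m)! :=
      Nat.choose_mul_factorial_mul_factorial hln
    have : n.choose m * m ! * ((n - m).choose l * l ! * (n - m - l)!) = n ! := by
      rw [c2]; exact c1
    calc (n ! : ℝ) = ((n.choose m * m ! * ((n - m).choose l * l ! * (n - m - l)!) : ℕ) : ℝ) := by
          rw [this]
      _ = _ := by push_cast; ring
  have e2 : (((l + s)!) : ℝ) = ((l + s).choose l : ℝ) * (l ! : ℝ) * (s ! : ℝ) := by
    have c3 : (l + s).choose l * l ! * (l + s - l)! = (l + s)! :=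
      Nat.choose_mul_factorial_mul_factorial (Nat.le_add_right l s)
    rw [Nat.add_sub_cancel_left] at c3
    calc (((l + s)!) : ℝ) = (((l + s).choose l * l ! * s !: ℕ) : ℝ) := by rw [c3]
      _ = _ := by push_cast; ring
  have hne1 : (m ! : ℝ) ≠ 0 := Nat.cast_ne_zero.2 (Nat.factorial_ne_zero m)
  have hne2 : (l ! : ℝ) ≠ 0 := Nat.cast_ne_zero.2 (Nat.factorial_ne_zero l)
  have hne3 : ((n - m - l)! : ℝ) ≠ 0 := Nat.cast_ne_zero.2 (Nat.factorial_ne_zero _)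
  have hne4 : ((s)! : ℝ) ≠ 0 := Nat.cast_ne_zero.2 (Nat.factorial_ne_zero _)
  have hne5 : ((l + s).choose l : ℝ) ≠ 0 :=
    Nat.cast_ne_zero.2 (Nat.choose_pos (Nat.le_add_right l s)).ne'
  simp only [hG, hH, hP]
  rw [e1, e2]
  field_simp
end

section
/- For every integer n ≥ 0, every integer r ≥ 1, all integers k_1,…,k_r, all positive reals a, b, c with ab > 1, every real x, every integer s ≥ 1, and every real λ ≠ 1, the generalized multi poly-Bernoulli polynomials satisfy B_n^{(k_1,…,k_r)}(x;a,b,c) = ∑_{m=0}^{n} [C(n,m)/(1−λ)^s] ∑_{j=0}^{s} C(s,j)(−λ)^{s−j} · B_{n−m}^{(k_1,…,k_r)}(j/r; a,b) · H_m^{(s)}(x·r·ln c; λ), where H_m^{(s)}(y;λ) are the higher-order Frobenius–Euler polynomials defined by ((1−λ)/(e^t−λ))^s e^{yt} = ∑_{m≥0} H_m^{(s)}(y;λ) t^m/m!. -/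
open Nat Finset

/-- Terms of an exponential series that converges on a punctured ball are absolutely
summable on a smaller ball. -/
lemma abs_summable_of_summable (u : ℕ → ℝ) (ε : ℝ) (hε : 0 < ε)
    (h : ∀ t : ℝ, t ≠ 0 → |t| < ε → Summable (fun n : ℕ => u n * t ^ n / (n ! : ℝ))) :
    ∀ t : ℝ, |t| < ε / 4 → Summable fun n : ℕ => ‖u n * t ^ n / (n ! : ℝ)‖ := by
  intro t ht
  have h2 : (0:ℝ) < ε / 2 := by linarith
  have hsum := h (ε/2) (ne_of_gt h2) (by rw [abs_of_pos h2]; linarith)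
  have htend := hsum.tendsto_atTop_zero.abs
  rw [abs_zero] at htend
  obtain ⟨C, hC⟩ := htend.bddAbove_range
  rw [mem_upperBounds] at hC
  set q : ℝ := |t| / (ε/2) with hq
  have hq0 : 0 ≤ q := div_nonneg (abs_nonneg t) h2.le
  have hq1 : q < 1 := by
    rw [hq, div_lt_one h2]
    have := abs_nonneg t
    linarith
  refine Summable.of_nonneg_of_le (fun n => norm_nonneg _) (fun n => ?_)
    ((summable_geometric_of_lt_one hq0 hq1).mul_left C)
  have htq : |t| = (ε/2) * q := by
    rw [hq]; field_simp
  calc ‖u n * t ^ n / (n ! : ℝ)‖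
      = |u n * (ε/2) ^ n / (n ! : ℝ)| * q ^ n := by
        rw [Real.norm_eq_abs, abs_div, abs_div, abs_mul, abs_mul, abs_pow, abs_pow,
          Nat.abs_cast, htq, mul_pow, abs_of_pos h2]
        ring
    _ ≤ C * q ^ n :=
        mul_le_mul_of_nonneg_right (hC _ (Set.mem_range_self n)) (pow_nonneg hq0 n)

/-- Uniqueness of exponential power series coefficients: if the series sums to `0`
on a punctured ball, all coefficients vanish. -/
lemma coeff_eq_zero (u : ℕ → ℝ) (ε : ℝ) (hε : 0 < ε)
    (h : ∀ t : ℝ, t ≠ 0 → |t| < ε → HasSum (fun n : ℕ => u n * t ^ n / (n ! : ℝ)) 0) :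
    ∀ n, u n = 0 := by
  set p : FormalMultilinearSeries ℝ ℝ ℝ :=
    FormalMultilinearSeries.ofScalars ℝ (fun n => u n / (n ! : ℝ)) with hpdef
  set g : ℝ → ℝ := fun t => if t = 0 then u 0 else 0 with hg
  have h2 : (0:ℝ) < ε / 2 := by linarith
  -- bound on terms at ε/2
  have hsum := (h (ε/2) (ne_of_gt h2) (by rw [abs_of_pos h2]; linarith)).summable
  have htend := hsum.tendsto_atTop_zero.abs
  rw [abs_zero] at htend
  obtain ⟨C, hC⟩ := htend.bddAbove_range
  rw [mem_upperBounds] at hC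
  have hC' : ∀ n : ℕ, |u n| * (ε/2) ^ n / (n ! : ℝ) ≤ C := by
    intro n
    have := hC _ (Set.mem_range_self n)
    rwa [abs_div, abs_mul, abs_pow, Nat.abs_cast, abs_of_pos h2] at this
  have hC0 : 0 ≤ C := le_trans (by positivity) (hC' 0)
  have hpn : ∀ n : ℕ, ‖p n‖ = |u n| / (n ! : ℝ) := by
    intro n
    rw [hpdef, FormalMultilinearSeries.ofScalars_norm, Real.norm_eq_abs, abs_div, Nat.abs_cast]
  have hrad : ENNReal.ofReal (ε/4) ≤ p.radius := by
    rw [ENNReal.ofReal]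
    apply p.le_radius_of_bound C
    intro n
    rw [hpn, Real.coe_toNNReal _ (by linarith)]
    have key : |u n| / (n ! : ℝ) * (ε/4) ^ n = (|u n| * (ε/2) ^ n / (n ! : ℝ)) * (1/2) ^ n := by
      rw [show (ε/4 : ℝ) = (ε/2) * (1/2) by ring, mul_pow]; ring
    rw [key]
    calc (|u n| * (ε/2) ^ n / (n ! : ℝ)) * (1/2) ^ n ≤ C * 1 := by
          apply mul_le_mul (hC' n) (pow_le_one₀ (by norm_num) (by norm_num)) (by positivity) hC0
      _ = C := mul_one C
  have hball : HasFPowerSeriesOnBall g p 0 (ENNReal.ofReal (ε/4)) := by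
    refine ⟨hrad, by positivity, ?_⟩
    intro y hy
    rw [zero_add]
    rw [mem_emetric_ball_zero_iff] at hy
    have hy4 : |y| < ε / 4 := by
      rw [← Real.norm_eq_abs, ← Real.toNNReal_lt_toNNReal_iff (by linarith)] at *
      · exact_mod_cast (by simpa [ENNReal.ofReal, show ‖y‖₊ = Real.nnabs y from NNReal.eq (by simp)] using hy)
    have hform : (fun n : ℕ => p n fun _ => y) = fun n : ℕ => u n * y ^ n / (n ! : ℝ) := by
      funext n
      rw [hpdef, FormalMultilinearSeries.ofScalars_apply_eq, smul_eq_mul]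
      ring
    rw [hform]
    by_cases hy0 : y = 0
    · subst hy0
      have : HasSum (fun n : ℕ => u n * (0:ℝ) ^ n / (n ! : ℝ)) (u 0 * (0:ℝ) ^ 0 / (0 ! : ℝ)) :=
        hasSum_single 0 (fun b hb => by simp [zero_pow hb])
      simpa [hg] using this
    · have := h y hy0 (hy4.trans (by linarith))
      simpa [hg, hy0] using this
  have hp : HasFPowerSeriesAt g p 0 := hball.hasFPowerSeriesAt
  have hu0 : u 0 = 0 := by
    have h1 : Filter.Tendsto g (nhdsWithin (0:ℝ) {(0:ℝ)}ᶜ) (nhds (g 0)) :=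
      (hp.continuousAt.tendsto).mono_left nhdsWithin_le_nhds
    have h2' : Filter.Tendsto g (nhdsWithin (0:ℝ) {(0:ℝ)}ᶜ) (nhds 0) := by
      apply Filter.Tendsto.congr' _ tendsto_const_nhds
      filter_upwards [self_mem_nhdsWithin] with z hz
      simp only [Set.mem_compl_iff, Set.mem_singleton_iff] at hz
      simp [hg, hz]
    have := tendsto_nhds_unique h1 h2'
    simpa [hg] using this
  have hg0 : g = 0 := by
    funext z
    by_cases hz : z = 0 <;> simp [hg, hz, hu0]
  rw [hg0] at hp
  have hp0 : p = 0 := hp.eq_zero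
  intro n
  have := congrFun hp0 n
  rw [hpdef] at this
  have h0 : u n / (n ! : ℝ) = 0 := by simpa using this
  exact (div_eq_zero_iff.mp h0).resolve_right (by exact_mod_cast n.factorial_ne_zero)

/-- Two exponential series with the same sum on a punctured ball have identical coefficients. -/
lemma coeff_unique (u v : ℕ → ℝ) (G : ℝ → ℝ) (ε : ℝ) (hε : 0 < ε)
    (hu : ∀ t : ℝ, t ≠ 0 → |t| < ε → HasSum (fun n : ℕ => u n * t ^ n / (n ! : ℝ)) (G t))
    (hv : ∀ t : ℝ, t ≠ 0 → |t| < ε → HasSum (fun n : ℕ => v n * t ^ n / (n ! : ℝ)) (G t)) :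
    ∀ n, u n = v n := by
  intro n
  have := coeff_eq_zero (fun m => u m - v m) ε hε (fun t ht hlt => by
    have := (hu t ht hlt).sub (hv t ht hlt)
    simpa [sub_mul, sub_div] using this) n
  linarith

/-- expression of the generalized multi poly-Bernoulli polynomials in terms of
higher-order Frobenius–Euler polynomials `H_m^{(s)}(y;λ)`. -/
theorem statement2
    (r : ℕ) (hr : 1 ≤ r) (k : Fin r → ℤ)
    (a b : ℝ) (ha : 0 < a) (hb : 0 < b) (hab : 1 < a * b)
    (B : ℝ → ℝ → ℕ → ℝ)
    (hB : ∀ c : ℝ, 0 < c → ∀ x : ℝ, ∃ ε > 0, ∀ t : ℝ, t ≠ 0 → |t| < ε →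
      HasSum (fun n : ℕ => B c x n * t ^ n / (n ! : ℝ))
        (multiPolylog r k (1 - (a * b) ^ (-t)) / (b ^ t - a ^ (-t)) ^ r *
          c ^ ((r : ℝ) * x * t)))
    (s : ℕ) (hs : 1 ≤ s) (lam : ℝ) (hlam : lam ≠ 1)
    (H : ℝ → ℕ → ℝ)
    (hH : ∀ y : ℝ, ∃ ε > 0, ∀ t : ℝ, t ≠ 0 → |t| < ε →
      HasSum (fun m : ℕ => H y m * t ^ m / (m ! : ℝ))
        (((1 - lam) / (Real.exp t - lam)) ^ s * Real.exp (y * t)))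
    (c : ℝ) (hc : 0 < c) (x : ℝ) (n : ℕ) :
    B c x n = ∑ m ∈ Finset.range (n + 1), ((n.choose m : ℝ) / (1 - lam) ^ s) *
      ∑ j ∈ Finset.range (s + 1),
        (s.choose j : ℝ) * (-lam) ^ (s - j) *
          B (Real.exp 1) ((j : ℝ) / (r : ℝ)) (n - m) * H (x * (r : ℝ) * Real.log c) m := by
  
  have hr0 : ((r : ℝ)) ≠ 0 := Nat.cast_ne_zero.mpr (by omega)
  have hl1 : (1 : ℝ) - lam ≠ 0 := sub_ne_zero.mpr (Ne.symm hlam)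
  set y : ℝ := x * (r : ℝ) * Real.log c with hy
  set F : ℝ → ℝ :=
    fun t => multiPolylog r k (1 - (a * b) ^ (-t)) / (b ^ t - a ^ (-t)) ^ r with hF
  -- choose radii
  obtain ⟨εc, hεcpos, hεc⟩ := hB c hc x
  obtain ⟨εH, hεHpos, hεH⟩ := hH y
  choose εB hεBpos hεB using fun j : ℕ => hB (Real.exp 1) (Real.exp_pos 1) ((j : ℝ) / (r : ℝ))
  set εlam : ℝ := if 0 < lam then |Real.log lam| else 1 with hεlam
  have hεlampos : 0 < εlam := by
    rw [hεlam]
    split_ifs with h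
    · rw [abs_pos]
      intro h0
      rcases Real.log_eq_zero.mp h0 with h1 | h1 | h1 <;> simp_all <;> linarith
    · norm_num
  have hexplam : ∀ t : ℝ, |t| < εlam → Real.exp t - lam ≠ 0 := by
    intro t htl
    rw [hεlam] at htl
    split_ifs at htl with h
    · intro h0
      have : Real.exp t = lam := by linarith
      have ht' : t = Real.log lam := by
        rw [← this, Real.log_exp]
      rw [ht'] at htl
      exact absurd htl (lt_irrefl _)
    · have := Real.exp_pos t
      push_neg at h
      intro h0; nlinarith
  set εB' : ℝ := (Finset.range (s + 1)).inf' ⟨0, by simp⟩ εB with hεB'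
  have hεB'pos : 0 < εB' := by
    rw [hεB']
    apply (Finset.lt_inf'_iff _).mpr
    intro j _; exact hεBpos j
  set ε : ℝ := min (min εc εH) (min εlam εB') with hε
  have hεpos : 0 < ε := by
    rw [hε]
    exact lt_min (lt_min hεcpos hεHpos) (lt_min hεlampos hεB'pos)
  -- the common generating function
  set G : ℝ → ℝ := fun t => F t * Real.exp (y * t) with hG
  -- coefficient sequences
  set A : ℕ → ℝ := fun q =>
    (∑ j ∈ Finset.range (s + 1), (s.choose j : ℝ) * (-lam) ^ (s - j) *
      B (Real.exp 1) ((j : ℝ) / (r : ℝ)) q) / (1 - lam) ^ s with hA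
  set D : ℕ → ℝ := fun m0 =>
    ∑ m ∈ Finset.range (m0 + 1), (m0.choose m : ℝ) * A (m0 - m) * H y m with hD
  -- LHS series
  have hu : ∀ t : ℝ, t ≠ 0 → |t| < ε → HasSum (fun n : ℕ => B c x n * t ^ n / (n ! : ℝ)) (G t) := by
    intro t ht htl
    have h1 := hεc t ht (htl.trans_le ((min_le_left _ _).trans (min_le_left _ _)))
    have : c ^ ((r : ℝ) * x * t) = Real.exp (y * t) := by
      rw [Real.rpow_def_of_pos hc, hy]; ring_nf
    rw [hG, hF]
    rw [this] at h1
    exact h1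
  -- series for A
  have hAsum : ∀ t : ℝ, t ≠ 0 → |t| < ε →
      HasSum (fun q : ℕ => A q * t ^ q / (q ! : ℝ))
        (F t * (Real.exp t - lam) ^ s / (1 - lam) ^ s) := by
    intro t ht htl
    have hj : ∀ j ∈ Finset.range (s + 1),
        HasSum (fun q : ℕ => (s.choose j : ℝ) * (-lam) ^ (s - j) *
            (B (Real.exp 1) ((j : ℝ) / (r : ℝ)) q * t ^ q / (q ! : ℝ)))
          ((s.choose j : ℝ) * (-lam) ^ (s - j) * (F t * Real.exp ((j : ℝ) * t))) := by
      intro j hjmem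
      have hjε : |t| < εB j := by
        refine htl.trans_le ((min_le_right _ _).trans ((min_le_right _ _).trans ?_))
        rw [hεB']
        exact Finset.inf'_le _ hjmem
      have h1 := hεB j t ht hjε
      have hrw : Real.exp 1 ^ ((r : ℝ) * ((j : ℝ) / (r : ℝ)) * t) = Real.exp ((j : ℝ) * t) := by
        rw [Real.exp_one_rpow]
        congr 1
        field_simp
      rw [hrw] at h1
      exact h1.mul_left _
    have hsum := (hasSum_sum hj).div_const ((1 - lam) ^ s)
    have hL : (fun q : ℕ => (∑ j ∈ Finset.range (s + 1), (s.choose j : ℝ) * (-lam) ^ (s - j) *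
        (B (Real.exp 1) ((j : ℝ) / (r : ℝ)) q * t ^ q / (q ! : ℝ))) / (1 - lam) ^ s)
        = fun q : ℕ => A q * t ^ q / (q ! : ℝ) := by
      funext q
      rw [hA]
      simp only [div_mul_eq_mul_div, div_div, Finset.sum_mul, Finset.sum_div]
      apply Finset.sum_congr rfl
      intro j _
      ring
    have hR : (∑ j ∈ Finset.range (s + 1), (s.choose j : ℝ) * (-lam) ^ (s - j) *
        (F t * Real.exp ((j : ℝ) * t))) / (1 - lam) ^ s
        = F t * (Real.exp t - lam) ^ s / (1 - lam) ^ s := by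
      congr 1
      rw [show Real.exp t - lam = Real.exp t + (-lam) by ring, add_pow, Finset.mul_sum]
      apply Finset.sum_congr rfl
      intro j _
      rw [Real.exp_nat_mul]
      ring
    rw [hL, hR] at hsum
    exact hsum
  have hHsum : ∀ t : ℝ, t ≠ 0 → |t| < ε →
      HasSum (fun m : ℕ => H y m * t ^ m / (m ! : ℝ))
        (((1 - lam) / (Real.exp t - lam)) ^ s * Real.exp (y * t)) := by
    intro t ht htl
    exact hεH t ht (htl.trans_le ((min_le_left _ _).trans (min_le_right _ _)))
  -- RHS series via Cauchy product
  have hv : ∀ t : ℝ, t ≠ 0 → |t| < ε / 4 →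
      HasSum (fun m0 : ℕ => D m0 * t ^ m0 / (m0 ! : ℝ)) (G t) := by
    intro t ht htl
    have htε : |t| < ε := htl.trans (by linarith)
    have sumA := abs_summable_of_summable A ε hεpos
      (fun t' ht' hlt' => (hAsum t' ht' hlt').summable) t htl
    have sumH := abs_summable_of_summable (H y) ε hεpos
      (fun t' ht' hlt' => (hHsum t' ht' hlt').summable) t htl
    have hAt := hAsum t ht htε
    have hHt := hHsum t ht htε
    have key := tsum_mul_tsum_eq_tsum_sum_range_of_summable_norm sumA sumH
    have scauchy := (summable_norm_sum_mul_range_of_summable_norm sumA sumH).of_norm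
    rw [hAt.tsum_eq, hHt.tsum_eq] at key
    have helam : Real.exp t - lam ≠ 0 :=
      hexplam t (htε.trans_le ((min_le_right _ _).trans (min_le_left _ _)))
    have hval : F t * (Real.exp t - lam) ^ s / (1 - lam) ^ s *
        (((1 - lam) / (Real.exp t - lam)) ^ s * Real.exp (y * t)) = G t := by
      rw [hG, div_pow]
      field_simp
    have hDser : HasSum (fun m0 : ℕ => ∑ i ∈ Finset.range (m0 + 1),
        (A i * t ^ i / (i ! : ℝ)) * (H y (m0 - i) * t ^ (m0 - i) / ((m0 - i)! : ℝ))) (G t) := by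
      rw [Summable.hasSum_iff scauchy, ← key]
      exact hval
    have hterm : (fun m0 : ℕ => ∑ i ∈ Finset.range (m0 + 1),
        (A i * t ^ i / (i ! : ℝ)) * (H y (m0 - i) * t ^ (m0 - i) / ((m0 - i)! : ℝ)))
        = fun m0 : ℕ => D m0 * t ^ m0 / (m0 ! : ℝ) := by
      funext m0
      rw [← Finset.sum_range_reflect]
      rw [hD, Finset.sum_mul, Finset.sum_div]
      apply Finset.sum_congr rfl
      intro m hm
      rw [Finset.mem_range] at hm
      have hm' : m ≤ m0 := by omega
      rw [show m0 + 1 - 1 - m = m0 - m by omega, Nat.sub_sub_self hm']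
      have hfac : ((m0.choose m : ℝ)) * (m ! : ℝ) * ((m0 - m)! : ℝ) = (m0 ! : ℝ) := by
        exact_mod_cast Nat.choose_mul_factorial_mul_factorial hm'
      have hfne : ((m0 - m)! : ℝ) ≠ 0 := Nat.cast_ne_zero.mpr (Nat.factorial_ne_zero _)
      have hfne2 : ((m ! : ℝ)) ≠ 0 := Nat.cast_ne_zero.mpr (Nat.factorial_ne_zero _)
      have hfne3 : ((m0 ! : ℝ)) ≠ 0 := Nat.cast_ne_zero.mpr (Nat.factorial_ne_zero _)
      have hpow : t ^ (m0 - m) * t ^ m = t ^ m0 := by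
        rw [← pow_add, Nat.sub_add_cancel hm']
      have hkey : (m0.choose m : ℝ) / (m0 ! : ℝ) = 1 / ((m ! : ℝ) * ((m0 - m)! : ℝ)) := by
        rw [div_eq_div_iff hfne3 (by positivity)]
        linear_combination hfac
      calc A (m0 - m) * t ^ (m0 - m) / ((m0 - m)! : ℝ) * (H y m * t ^ m / (m ! : ℝ))
          = A (m0 - m) * H y m * (t ^ (m0 - m) * t ^ m) *
            ((1:ℝ) / ((m ! : ℝ) * ((m0 - m)! : ℝ))) := by ring
        _ = A (m0 - m) * H y m * t ^ m0 * ((m0.choose m : ℝ) / (m0 ! : ℝ)) := by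
            rw [hpow, hkey]
        _ = (m0.choose m : ℝ) * A (m0 - m) * H y m * t ^ m0 / (m0 ! : ℝ) := by ring
    rw [hterm] at hDser
    exact hDser
  -- uniqueness of coefficients
  have hBD : B c x n = D n := by
    refine coeff_unique (B c x) D G (ε / 4) (by linarith) ?_ hv n
    intro t ht htl
    exact hu t ht (htl.trans (by linarith))
  rw [hBD, hD]
  apply Finset.sum_congr rfl
  intro m _
  rw [hA, ← Finset.sum_mul]
  ring
end

section
/- For every integer n ≥ 0, every integer r ≥ 1, all integers k_1,…,k_r, all positive reals a, b, c with ab > 1, and every real x, one has B_n^{(k_1,…,k_r)}(x;a,b,c) = (ln a + ln b)^n · B_n^{(k_1,…,k_r)}((x·ln c − ln b)/(ln a + ln b)), relating the three-parameter generalized multi poly-Bernoulli polynomials to the basic multi poly-Bernoulli polynomials B_n^{(k_1,…,k_r)}(x). -/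
open Nat Finset

open FormalMultilinearSeries Filter in
lemma coeffs_eq_zero_of_hasSum_zero (g : ℕ → ℝ) (ε : ℝ) (hε : 0 < ε)
    (H : ∀ t : ℝ, t ≠ 0 → |t| < ε → HasSum (fun n => g n * t ^ n) 0) :
    ∀ n, g n = 0 := by
  set p : FormalMultilinearSeries ℝ ℝ ℝ := ofScalars ℝ g with hp
  have hsum : Summable (fun n => g n * (ε/2) ^ n) :=
    (H (ε/2) (by positivity) (by rw [abs_of_pos (by positivity)]; linarith)).summable
  have h0 : Tendsto (fun n => |g n * (ε/2)^n|) atTop (nhds 0) := by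
    simpa using hsum.tendsto_atTop_zero.abs
  obtain ⟨C, hC⟩ := h0.bddAbove_range
  have hCbound : ∀ n, |g n * (ε/2)^n| ≤ C := fun n => hC (Set.mem_range_self n)
  have hrad : 0 < p.radius := by
    refine lt_of_lt_of_le ?_ (p.le_radius_of_bound C (r := ⟨ε/2, by positivity⟩) ?_)
    · exact ENNReal.coe_pos.mpr (by exact_mod_cast (by positivity : (0:ℝ) < ε/2))
    · intro n
      rw [hp, ofScalars_norm]
      calc ‖g n‖ * ((⟨ε/2, by positivity⟩ : NNReal) : ℝ) ^ n
          = |g n * (ε/2)^n| := by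
            simp [Real.norm_eq_abs, abs_mul, abs_pow,
              abs_of_pos (show (0:ℝ) < ε/2 by positivity)]
        _ ≤ C := hCbound n
  have hat : HasFPowerSeriesAt p.sum p 0 := (p.hasFPowerSeriesOnBall hrad).hasFPowerSeriesAt
  have hsumeq : ∀ z : ℝ, p.sum z = ∑' n, g n * z ^ n := by
    intro z
    refine tsum_congr fun n => ?_
    rw [hp, ofScalars_apply_eq, smul_eq_mul]
  have hev : ∀ᶠ z in nhdsWithin (0:ℝ) {(0:ℝ)}ᶜ, p.sum z = 0 := by
    filter_upwards [mem_nhdsWithin_of_mem_nhds (Metric.ball_mem_nhds (0:ℝ) hε),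
      self_mem_nhdsWithin] with z hz hz'
    rw [hsumeq z, (H z hz' (by simpa [Real.dist_eq] using hz)).tsum_eq]
  have hfreq : ∃ᶠ z in nhdsWithin (0:ℝ) {(0:ℝ)}ᶜ, p.sum z = 0 := hev.frequently
  have : ∀ᶠ z in nhds (0:ℝ), p.sum z = 0 :=
    (hat.analyticAt.frequently_zero_iff_eventually_zero).mp hfreq
  have hp0 : p = 0 := hat.locally_zero_iff.mp this
  have : g = 0 := (ofScalars_series_eq_zero ℝ).mp hp0
  intro n; rw [this]; rfl

/-- `B_n^{(k_1,…,k_r)}(x;a,b,c) = (ln a + ln b)^n ·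
B_n^{(k_1,…,k_r)}((x ln c − ln b)/(ln a + ln b))`, where `B_n^{(k_1,…,k_r)}(x)` are the basic
multi poly-Bernoulli polynomials with e.g.f. `Li(1−e^{−t})/(1−e^{−t})^r · e^{rxt}`. -/
theorem statement5
    (r : ℕ) (hr : 1 ≤ r) (k : Fin r → ℤ)
    (a b : ℝ) (ha : 0 < a) (hb : 0 < b) (hab : 1 < a * b)
    (B : ℝ → ℝ → ℕ → ℝ)
    (hB : ∀ c : ℝ, 0 < c → ∀ x : ℝ, ∃ ε > 0, ∀ t : ℝ, t ≠ 0 → |t| < ε →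
      HasSum (fun n : ℕ => B c x n * t ^ n / (n ! : ℝ))
        (multiPolylog r k (1 - (a * b) ^ (-t)) / (b ^ t - a ^ (-t)) ^ r *
          c ^ ((r : ℝ) * x * t)))
    (B0 : ℝ → ℕ → ℝ)
    (hB0 : ∀ x : ℝ, ∃ ε > 0, ∀ t : ℝ, t ≠ 0 → |t| < ε →
      HasSum (fun n : ℕ => B0 x n * t ^ n / (n ! : ℝ))
        (multiPolylog r k (1 - Real.exp (-t)) / (1 - Real.exp (-t)) ^ r *
          Real.exp ((r : ℝ) * x * t)))
    (c : ℝ) (hc : 0 < c) (x : ℝ) (n : ℕ) :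
    B c x n = (Real.log a + Real.log b) ^ n *
      B0 ((x * Real.log c - Real.log b) / (Real.log a + Real.log b)) n := by
  set L := Real.log a + Real.log b with hLdef
  have hLeq : L = Real.log (a*b) := (Real.log_mul ha.ne' hb.ne').symm
  have hLpos : 0 < L := hLeq ▸ Real.log_pos hab
  set y := (x * Real.log c - Real.log b) / L with hy
  obtain ⟨ε₁, hε₁, H1⟩ := hB c hc x
  obtain ⟨ε₂, hε₂, H2⟩ := hB0 y
  have hε : 0 < min ε₁ (ε₂ / L) := lt_min hε₁ (div_pos hε₂ hLpos)
  have key : ∀ m, (B c x m - L ^ m * B0 y m) / (m ! : ℝ) = 0 := by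
    refine coeffs_eq_zero_of_hasSum_zero _ _ hε ?_
    intro t ht htε
    have ht1 : |t| < ε₁ := lt_of_lt_of_le htε (min_le_left _ _)
    have ht2 : |L * t| < ε₂ := by
      rw [abs_mul, abs_of_pos hLpos]
      have := lt_of_lt_of_le htε (min_le_right _ _)
      calc L * |t| < L * (ε₂ / L) := by exact (mul_lt_mul_iff_right₀ hLpos).mpr this
        _ = ε₂ := by field_simp
    have h1 := H1 t ht ht1
    have h2 := H2 (L * t) (mul_ne_zero hLpos.ne' ht) ht2
    -- identify the two sums
    have hyL : y * L = x * Real.log c - Real.log b := div_mul_cancel₀ _ hLpos.ne'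
    have e1 : (1 : ℝ) - (a*b) ^ (-t) = 1 - Real.exp (-(L*t)) := by
      rw [Real.rpow_def_of_pos (by positivity), hLeq]; ring_nf
    have e2 : ((b:ℝ) ^ t - a ^ (-t)) ^ r
        = (1 - Real.exp (-(L*t))) ^ r * Real.exp ((r:ℝ) * Real.log b * t) := by
      rw [Real.rpow_def_of_pos hb, Real.rpow_def_of_pos ha,
        show ((r:ℝ) * Real.log b * t) = (r:ℝ) * (Real.log b * t) by ring,
        Real.exp_nat_mul, ← mul_pow]
      congr 1
      rw [sub_mul, one_mul, ← Real.exp_add]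
      congr 2
      rw [hLdef]; ring
    have e3 : (c:ℝ) ^ ((r:ℝ) * x * t) = Real.exp ((r:ℝ) * x * t * Real.log c) := by
      rw [Real.rpow_def_of_pos hc]; ring_nf
    have e4 : Real.exp ((r:ℝ) * y * (L*t))
        = Real.exp ((r:ℝ) * x * t * Real.log c) / Real.exp ((r:ℝ) * Real.log b * t) := by
      rw [eq_div_iff (Real.exp_ne_zero _), ← Real.exp_add]
      congr 1
      linear_combination (r:ℝ) * t * hyL
    have hE : multiPolylog r k (1 - (a * b) ^ (-t)) / (b ^ t - a ^ (-t)) ^ r *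
          c ^ ((r : ℝ) * x * t)
        = multiPolylog r k (1 - Real.exp (-(L*t))) / (1 - Real.exp (-(L*t))) ^ r *
          Real.exp ((r : ℝ) * y * (L*t)) := by
      rw [e1, e2, e3, e4]
      have hexp := Real.exp_ne_zero ((r:ℝ) * Real.log b * t)
      field_simp
    have hfun : (fun n : ℕ => (L ^ n * B0 y n) * t ^ n / (n ! : ℝ))
        = fun n : ℕ => B0 y n * (L*t) ^ n / (n ! : ℝ) := by
      funext n; rw [mul_pow]; ring
    have h2' : HasSum (fun n : ℕ => (L ^ n * B0 y n) * t ^ n / (n ! : ℝ))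
        (multiPolylog r k (1 - Real.exp (-(L*t))) / (1 - Real.exp (-(L*t))) ^ r *
          Real.exp ((r : ℝ) * y * (L*t))) := by
      rw [hfun]; exact h2
    rw [hE] at h1
    have h3 := h1.sub h2'
    rw [sub_self] at h3
    have hfun2 : (fun n : ℕ => (B c x n - L ^ n * B0 y n) / (n ! : ℝ) * t ^ n)
        = fun n : ℕ => B c x n * t ^ n / (n ! : ℝ) - (L ^ n * B0 y n) * t ^ n / (n ! : ℝ) := by
      funext n; ring
    rw [hfun2]; exact h3
  have hfac : ((n ! : ℝ)) ≠ 0 := Nat.cast_ne_zero.mpr (Nat.factorial_ne_zero n)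
  have := key n
  rw [div_eq_zero_iff] at this
  rcases this with h | h
  · linarith [sub_eq_zero.mp h]
  · exact absurd h hfac
end

section
/- For every integer n ≥ 0, every integer r ≥ 1, all integers k_1,…,k_r, and all positive reals a, b, c with ab > 1, the polynomial function x ↦ B_{n+1}^{(k_1,…,k_r)}(x;a,b,c) satisfies the derivative identity (d/dx) B_{n+1}^{(k_1,…,k_r)}(x;a,b,c) = (n+1)·(r·ln c)·B_n^{(k_1,…,k_r)}(x;a,b,c) for all real x. -/
open Nat Finset

open Filter in
lemma coeff_unique_s6 {f g : ℕ → ℝ} {ε : ℝ} (hε : 0 < ε)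
    (h : ∀ t : ℝ, t ≠ 0 → |t| < ε → ∃ S, HasSum (fun n => f n * t ^ n) S ∧
      HasSum (fun n => g n * t ^ n) S) : f = g := by
  have hsum_eq : ∀ (cs : ℕ → ℝ) (t : ℝ),
      (FormalMultilinearSeries.ofScalars ℝ cs).sum t = ∑' n, cs n * t ^ n := by
    intro cs t
    rw [FormalMultilinearSeries.sum]
    exact tsum_congr fun n => by
      rw [FormalMultilinearSeries.ofScalars_apply_eq, smul_eq_mul]
  have hrad : ∀ (cs : ℕ → ℝ), (∃ S, HasSum (fun n => cs n * (ε / 2) ^ n) S) →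
      0 < (FormalMultilinearSeries.ofScalars ℝ cs).radius := by
    intro cs ⟨S, hS⟩
    have habs : Summable fun n => |cs n| * (ε / 2) ^ n := by
      have := (summable_abs_iff.mpr hS.summable)
      refine this.congr fun n => ?_
      rw [abs_mul, abs_pow, abs_of_pos (show (0:ℝ) < ε / 2 by linarith)]
    have hle := (FormalMultilinearSeries.ofScalars ℝ cs).le_radius_of_summable_norm
      (r := (ε / 2).toNNReal) ?_
    · refine lt_of_lt_of_le ?_ hle
      rw [ENNReal.coe_pos, ← NNReal.coe_pos, Real.coe_toNNReal _ (by linarith)]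
      linarith
    · refine habs.congr fun n => ?_
      rw [FormalMultilinearSeries.ofScalars_norm, Real.norm_eq_abs,
        Real.coe_toNNReal _ (by linarith : (0:ℝ) ≤ ε / 2)]
  have h0 : (ε / 2 : ℝ) ≠ 0 := by positivity
  have h0' : |(ε / 2 : ℝ)| < ε := by rw [abs_of_pos (by linarith)]; linarith
  obtain ⟨S0, hfS0, hgS0⟩ := h (ε / 2) h0 h0'
  have hpr := hrad f ⟨S0, hfS0⟩
  have hqr := hrad g ⟨S0, hgS0⟩
  set p := FormalMultilinearSeries.ofScalars ℝ f with hp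
  set q := FormalMultilinearSeries.ofScalars ℝ g with hq
  have hpA : HasFPowerSeriesAt p.sum p 0 :=
    (p.hasFPowerSeriesOnBall hpr).hasFPowerSeriesAt
  have hqA : HasFPowerSeriesAt q.sum q 0 :=
    (q.hasFPowerSeriesOnBall hqr).hasFPowerSeriesAt
  have key : ∀ t : ℝ, t ≠ 0 → |t| < ε → p.sum t = q.sum t := by
    intro t ht htε
    obtain ⟨S, hfS, hgS⟩ := h t ht htε
    rw [hsum_eq, hsum_eq, hfS.tsum_eq, hgS.tsum_eq]
  have hball : ∀ᶠ t in nhds (0 : ℝ), |t| < ε := by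
    filter_upwards [Metric.ball_mem_nhds (0 : ℝ) hε] with t ht
    simpa [Real.dist_eq] using ht
  have heq0 : p.sum 0 = q.sum 0 := by
    have hpc : Tendsto p.sum (nhdsWithin (0:ℝ) {(0:ℝ)}ᶜ) (nhds (p.sum 0)) :=
      hpA.continuousAt.tendsto.mono_left nhdsWithin_le_nhds
    have hqc : Tendsto p.sum (nhdsWithin (0:ℝ) {(0:ℝ)}ᶜ) (nhds (q.sum 0)) := by
      refine (hqA.continuousAt.tendsto.mono_left nhdsWithin_le_nhds).congr' ?_
      filter_upwards [eventually_nhdsWithin_of_eventually_nhds hball,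
        self_mem_nhdsWithin] with t h1 h2
      exact (key t h2 h1).symm
    exact tendsto_nhds_unique hpc hqc
  have heq : ∀ᶠ t in nhds (0 : ℝ), p.sum t = q.sum t := by
    filter_upwards [hball] with t ht
    by_cases h' : t = 0
    · rw [h']; exact heq0
    · exact key t h' ht
  have := hpA.eq_formalMultilinearSeries_of_eventually hqA heq
  exact FormalMultilinearSeries.ofScalars_series_injective ℝ ℝ this

/-- `(d/dx) B_{n+1}^{(k_1,…,k_r)}(x;a,b,c) = (n+1)(r ln c) B_n^{(k_1,…,k_r)}(x;a,b,c)`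
for all real `x`. -/
theorem statement6
    (r : ℕ) (hr : 1 ≤ r) (k : Fin r → ℤ)
    (a b : ℝ) (ha : 0 < a) (hb : 0 < b) (hab : 1 < a * b)
    (B : ℝ → ℝ → ℕ → ℝ)
    (hB : ∀ c : ℝ, 0 < c → ∀ x : ℝ, ∃ ε > 0, ∀ t : ℝ, t ≠ 0 → |t| < ε →
      HasSum (fun n : ℕ => B c x n * t ^ n / (n ! : ℝ))
        (multiPolylog r k (1 - (a * b) ^ (-t)) / (b ^ t - a ^ (-t)) ^ r *
          c ^ ((r : ℝ) * x * t)))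
    (c : ℝ) (hc : 0 < c) (n : ℕ) :
    ∀ x : ℝ, HasDerivAt (fun y : ℝ => B c y (n + 1))
      (((n : ℝ) + 1) * ((r : ℝ) * Real.log c) * B c x n) x := by
  intro x
  set L : ℝ := (r : ℝ) * Real.log c with hLdef
  clear_value L
  -- the binomial expansion around basepoint x
  have key : ∀ (y : ℝ) (m : ℕ), B c y m =
      ∑ j ∈ Finset.range (m + 1), (m.choose j : ℝ) * B c x j * (L * (y - x)) ^ (m - j) := by
    intro y m
    obtain ⟨ε₁, hε₁, H₁⟩ := hB c hc x
    obtain ⟨ε₂, hε₂, H₂⟩ := hB c hc y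
    have hε : 0 < min ε₁ ε₂ := lt_min hε₁ hε₂
    set d : ℝ := y - x with hddef
    clear_value d
    have hfg : (fun m : ℕ => B c y m / m !) = (fun m : ℕ => ∑ j ∈ Finset.range (m + 1),
        (B c x j / j !) * ((L * d) ^ (m - j) / (m - j)!)) := by
      apply coeff_unique_s6 hε
      intro t ht htε
      have h1 := H₁ t ht (lt_of_lt_of_le htε (min_le_left _ _))
      have h2 := H₂ t ht (lt_of_lt_of_le htε (min_le_right _ _))
      -- exponential series for c ^ (r * d * t)
      have h3 : HasSum (fun m : ℕ => (L * d) ^ m * t ^ m / m !)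
          (c ^ ((r : ℝ) * d * t)) := by
        have he := NormedSpace.expSeries_div_hasSum_exp (L * d * t)
        rw [← Real.exp_eq_exp_ℝ] at he
        have hcpow : c ^ ((r : ℝ) * d * t) = Real.exp (L * d * t) := by
          rw [Real.rpow_def_of_pos hc]
          congr 1
          rw [hLdef]; ring
        have heq : (fun m : ℕ => (L * d) ^ m * t ^ m / m !)
            = fun m : ℕ => (L * d * t) ^ m / m ! := by
          funext m; ring
        rw [hcpow, heq]
        exact he
      -- absolute summability
      have h1n : Summable fun m : ℕ => ‖B c x m * t ^ m / (m ! : ℝ)‖ := by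
        simpa only [Real.norm_eq_abs] using summable_abs_iff.mpr h1.summable
      have h3n : Summable fun m : ℕ => ‖(L * d) ^ m * t ^ m / (m ! : ℝ)‖ := by
        simpa only [Real.norm_eq_abs] using summable_abs_iff.mpr h3.summable
      have hprod := hasSum_sum_range_mul_of_summable_norm h1n h3n
      rw [h1.tsum_eq, h3.tsum_eq] at hprod
      refine ⟨multiPolylog r k (1 - (a * b) ^ (-t)) / (b ^ t - a ^ (-t)) ^ r *
        c ^ ((r : ℝ) * y * t), ?_, ?_⟩
      · refine h2.congr_fun fun m => ?_
        ring
      · have hval : multiPolylog r k (1 - (a * b) ^ (-t)) / (b ^ t - a ^ (-t)) ^ r *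
              c ^ ((r : ℝ) * x * t) * c ^ ((r : ℝ) * d * t)
            = multiPolylog r k (1 - (a * b) ^ (-t)) / (b ^ t - a ^ (-t)) ^ r *
              c ^ ((r : ℝ) * y * t) := by
          rw [mul_assoc, ← Real.rpow_add hc]
          congr 2
          rw [hddef]; ring
        rw [← hval]
        refine hprod.congr_fun fun m => ?_
        rw [Finset.sum_mul]
        refine Finset.sum_congr rfl fun j hj => ?_
        have hjm : j ≤ m := Nat.lt_succ_iff.mp (Finset.mem_range.mp hj)
        have hpow : t ^ j * t ^ (m - j) = t ^ m := by
          rw [← pow_add, Nat.add_sub_cancel' hjm]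
        field_simp
        rw [← hpow]
        ring
    -- extract the coefficient identity
    have hm := congrFun hfg m
    have hfact : (m ! : ℝ) ≠ 0 := Nat.cast_ne_zero.mpr (Nat.factorial_ne_zero m)
    have : B c y m = (m ! : ℝ) * (B c y m / m !) := by field_simp
    rw [this, hm, Finset.mul_sum]
    refine Finset.sum_congr rfl fun j hj => ?_
    have hjm : j ≤ m := Nat.lt_succ_iff.mp (Finset.mem_range.mp hj)
    rw [Nat.cast_choose ℝ hjm]
    have hj0 : (j ! : ℝ) ≠ 0 := Nat.cast_ne_zero.mpr (Nat.factorial_ne_zero j)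
    have hmj0 : ((m - j)! : ℝ) ≠ 0 := Nat.cast_ne_zero.mpr (Nat.factorial_ne_zero (m - j))
    field_simp
  -- now the derivative
  have hfun : (fun y : ℝ => B c y (n + 1)) = fun y : ℝ =>
      ∑ j ∈ Finset.range (n + 2), ((n + 1).choose j : ℝ) * B c x j * (L * (y - x)) ^ (n + 1 - j) :=
    funext fun y => key y (n + 1)
  rw [hfun]
  have hinner : HasDerivAt (fun y : ℝ => L * (y - x)) L x := by
    simpa using ((hasDerivAt_id x).sub_const x).const_mul L
  have hder : HasDerivAt (fun y : ℝ =>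
      ∑ j ∈ Finset.range (n + 2), ((n + 1).choose j : ℝ) * B c x j * (L * (y - x)) ^ (n + 1 - j))
      (∑ j ∈ Finset.range (n + 2), ((n + 1).choose j : ℝ) * B c x j *
        (((n + 1 - j : ℕ) : ℝ) * (L * (x - x)) ^ (n + 1 - j - 1) * L)) x := by
    refine HasDerivAt.fun_sum fun j hj => ?_
    exact (hinner.pow (n + 1 - j)).const_mul _
  convert hder using 1
  rw [Finset.sum_eq_single n]
  · have : n + 1 - n = 1 := by omega
    rw [this]
    simp [Nat.choose_succ_self_right]
    ring
  · intro j hj hjn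
    have hj2 : j < n + 2 := Finset.mem_range.mp hj
    rcases lt_or_ge j n with hlt | hge
    · have h2 : n + 1 - j - 1 ≠ 0 := by omega
      rw [sub_self, mul_zero, zero_pow h2]
      ring
    · have hj1 : j = n + 1 := by omega
      rw [hj1]
      simp
  · intro hn
    exact absurd (Finset.mem_range.mpr (by omega)) hn
end

section
/- (Addition formula) For every integer n ≥ 0, every integer r ≥ 1, all integers k_1,…,k_r, all positive reals a, b, c with ab > 1, and all reals x, y, one has B_n^{(k_1,…,k_r)}(x+y;a,b,c) = ∑_{i=0}^{n} C(n,i) (r·ln c)^{n−i} B_i^{(k_1,…,k_r)}(x;a,b,c) y^{n−i}. -/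
open Nat Finset Filter
open scoped Topology ENNReal NNReal
/-- If the scalar series `∑ A n * t ^ n` is (conditionally) summable for `|t| < ε`, then
its sum function has the formal power series `ofScalars ℝ A` on the ball of radius `ε / 2`. -/
lemma aux_ball (A : ℕ → ℝ) {ε : ℝ} (hε : 0 < ε)
    (h : ∀ t : ℝ, |t| < ε → Summable (fun n => A n * t ^ n)) :
    HasFPowerSeriesOnBall (fun t => ∑' n, A n * t ^ n)
      (FormalMultilinearSeries.ofScalars ℝ A) 0 (ENNReal.ofReal (ε / 2)) := by
  have hε2 : 0 < ε / 2 := by linarith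
  have hrad : ENNReal.ofReal (ε / 2) ≤ (FormalMultilinearSeries.ofScalars ℝ A).radius := by
    have h2 : Summable (fun n => A n * (ε / 2) ^ n) :=
      h _ (by rw [abs_of_pos hε2]; linarith)
    have h3 : Filter.Tendsto (fun n => |A n * (ε / 2) ^ n|) atTop (𝓝 0) := by
      simpa using h2.tendsto_atTop_zero.abs
    have h4 : Filter.Tendsto
        (fun n => ‖FormalMultilinearSeries.ofScalars ℝ A n‖ * ((ε / 2).toNNReal : ℝ) ^ n)
        atTop (𝓝 0) := by
      refine h3.congr fun n => ?_
      rw [abs_mul, abs_pow, abs_of_pos hε2, FormalMultilinearSeries.ofScalars_norm,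
        Real.norm_eq_abs, Real.coe_toNNReal _ hε2.le]
    have := (FormalMultilinearSeries.ofScalars ℝ A).le_radius_of_tendsto h4
    rwa [ENNReal.ofReal] 
  refine ⟨hrad, ENNReal.ofReal_pos.mpr hε2, fun {t} ht => ?_⟩
  rw [Metric.emetric_ball, Metric.mem_ball, Real.dist_eq, sub_zero] at ht
  have ht' : |t| < ε := by linarith [ht]
  simp only [FormalMultilinearSeries.ofScalars_apply_eq, smul_eq_mul, zero_add]
  exact (h t ht').hasSum

/-- Uniqueness of coefficients of scalar power series agreeing on a punctured neighborhood. -/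
lemma aux_unique (A A' : ℕ → ℝ) {ε : ℝ} (hε : 0 < ε)
    (hA : ∀ t : ℝ, |t| < ε → Summable (fun n => A n * t ^ n))
    (hA' : ∀ t : ℝ, |t| < ε → Summable (fun n => A' n * t ^ n))
    (heq : ∀ t : ℝ, t ≠ 0 → |t| < ε → (∑' n, A n * t ^ n) = ∑' n, A' n * t ^ n) :
    A = A' := by
  have hp : HasFPowerSeriesAt (fun t => ∑' n, A n * t ^ n)
      (FormalMultilinearSeries.ofScalars ℝ A) 0 := ⟨_, aux_ball A hε hA⟩
  have hq : HasFPowerSeriesAt (fun t => ∑' n, A' n * t ^ n)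
      (FormalMultilinearSeries.ofScalars ℝ A') 0 := ⟨_, aux_ball A' hε hA'⟩
  have hball : ∀ᶠ t in 𝓝 (0 : ℝ), |t| < ε := by
    filter_upwards [Metric.ball_mem_nhds (0 : ℝ) hε] with t ht
    simpa [Real.dist_eq] using ht
  have hne : ∀ᶠ t in 𝓝[≠] (0 : ℝ),
      (fun t => ∑' n, A n * t ^ n) t = (fun t => ∑' n, A' n * t ^ n) t := by
    filter_upwards [eventually_nhdsWithin_of_eventually_nhds hball, self_mem_nhdsWithin]
      with t ht hne
    exact heq t hne ht
  have h0 : (∑' n, A n * (0 : ℝ) ^ n) = ∑' n, A' n * (0 : ℝ) ^ n := by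
    have t1 : Filter.Tendsto (fun t => ∑' n, A n * t ^ n) (𝓝[≠] (0 : ℝ))
        (𝓝 (∑' n, A n * (0 : ℝ) ^ n)) := hp.continuousAt.continuousWithinAt
    have t2 : Filter.Tendsto (fun t => ∑' n, A' n * t ^ n) (𝓝[≠] (0 : ℝ))
        (𝓝 (∑' n, A' n * (0 : ℝ) ^ n)) := hq.continuousAt.continuousWithinAt
    exact tendsto_nhds_unique (t1.congr' hne) t2
  have heqn : ∀ᶠ t in 𝓝 (0 : ℝ),
      (fun t => ∑' n, A n * t ^ n) t = (fun t => ∑' n, A' n * t ^ n) t := by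
    filter_upwards [hball] with t ht
    rcases eq_or_ne t 0 with rfl | hne'
    · exact h0
    · exact heq t hne' ht
  have := hp.eq_formalMultilinearSeries_of_eventually hq heqn
  exact FormalMultilinearSeries.ofScalars_series_injective ℝ ℝ this

/-- Addition formula: `B_n^{(k_1,…,k_r)}(x+y;a,b,c) =
∑_{i=0}^{n} C(n,i) (r ln c)^{n-i} B_i^{(k_1,…,k_r)}(x;a,b,c) y^{n-i}`. -/
theorem statement9
    (r : ℕ) (hr : 1 ≤ r) (k : Fin r → ℤ)
    (a b : ℝ) (ha : 0 < a) (hb : 0 < b) (hab : 1 < a * b)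
    (B : ℝ → ℝ → ℕ → ℝ)
    (hB : ∀ c : ℝ, 0 < c → ∀ x : ℝ, ∃ ε > 0, ∀ t : ℝ, t ≠ 0 → |t| < ε →
      HasSum (fun n : ℕ => B c x n * t ^ n / (n ! : ℝ))
        (multiPolylog r k (1 - (a * b) ^ (-t)) / (b ^ t - a ^ (-t)) ^ r *
          c ^ ((r : ℝ) * x * t)))
    (c : ℝ) (hc : 0 < c) (x y : ℝ) (n : ℕ) :
    B c (x + y) n = ∑ i ∈ Finset.range (n + 1),
      (n.choose i : ℝ) * ((r : ℝ) * Real.log c) ^ (n - i) * B c x i * y ^ (n - i) := by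
  classical
  obtain ⟨ε₁, hε₁, H₁⟩ := hB c hc (x + y)
  obtain ⟨ε₂, hε₂, H₂⟩ := hB c hc x
  set d : ℝ := (r : ℝ) * Real.log c * y with hd
  set L : ℝ → ℝ := fun t =>
    multiPolylog r k (1 - (a * b) ^ (-t)) / (b ^ t - a ^ (-t)) ^ r with hL
  set A : ℕ → ℝ := fun m => B c (x + y) m / m ! with hA
  set Cc : ℕ → ℝ := fun m => B c x m / m ! with hCc
  set Pn : ℕ → ℝ := fun m =>
    ∑ i ∈ Finset.range (m + 1), Cc i * (d ^ (m - i) / (m - i)!) with hPn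
  set εm : ℝ := min ε₁ ε₂ with hεm
  have hεm0 : 0 < εm := lt_min hε₁ hε₂
  -- summability of the A-series
  have hAsum : ∀ t : ℝ, |t| < εm → Summable (fun m => A m * t ^ m) := by
    intro t ht
    rcases eq_or_ne t 0 with rfl | hne
    · exact (hasSum_single (f := fun m => A m * (0 : ℝ) ^ m) 0
        (fun b hb => by simp [zero_pow hb])).summable
    · refine ((H₁ t hne (lt_of_lt_of_le ht (min_le_left _ _))).summable).congr fun m => ?_
      simp only [hA]; ring
  have hCsum : ∀ t : ℝ, |t| < εm → Summable (fun m => Cc m * t ^ m) := by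
    intro t ht
    rcases eq_or_ne t 0 with rfl | hne
    · exact (hasSum_single (f := fun m => Cc m * (0 : ℝ) ^ m) 0
        (fun b hb => by simp [zero_pow hb])).summable
    · refine ((H₂ t hne (lt_of_lt_of_le ht (min_le_right _ _))).summable).congr fun m => ?_
      simp only [hCc]; ring
  -- values of the sums on punctured neighborhoods
  have hfval : ∀ t : ℝ, t ≠ 0 → |t| < εm →
      (∑' m, A m * t ^ m) = L t * c ^ ((r : ℝ) * (x + y) * t) := by
    intro t hne ht
    have h1 := H₁ t hne (lt_of_lt_of_le ht (min_le_left _ _))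
    have h2 : HasSum (fun m => A m * t ^ m) (L t * c ^ ((r : ℝ) * (x + y) * t)) := by
      refine h1.congr_fun fun m => ?_
      simp only [hA]; ring
    exact h2.tsum_eq
  have hgval : ∀ t : ℝ, t ≠ 0 → |t| < εm →
      (∑' m, Cc m * t ^ m) = L t * c ^ ((r : ℝ) * x * t) := by
    intro t hne ht
    have h1 := H₂ t hne (lt_of_lt_of_le ht (min_le_right _ _))
    have h2 : HasSum (fun m => Cc m * t ^ m) (L t * c ^ ((r : ℝ) * x * t)) := by
      refine h1.congr_fun fun m => ?_
      simp only [hCc]; ring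
    exact h2.tsum_eq
  -- Cauchy product: the Pn-series sums to (∑ Cc-series) * exp (d * t) for |t| < εm / 2
  have hεm2 : 0 < εm / 2 := by linarith
  have hcauchy : ∀ t : ℝ, |t| < εm / 2 →
      HasSum (fun m => Pn m * t ^ m) ((∑' m, Cc m * t ^ m) * Real.exp (d * t)) := by
    intro t ht
    -- absolute summability of the Cc-series
    have hrad := (aux_ball Cc hεm0 hCsum).r_le
    have hlt : (‖t‖₊ : ℝ≥0∞) < (FormalMultilinearSeries.ofScalars ℝ Cc).radius := by
      refine lt_of_lt_of_le ?_ hrad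
      rw [← enorm_eq_nnnorm, ← ofReal_norm]
      exact (ENNReal.ofReal_lt_ofReal_iff hεm2).mpr (by rwa [Real.norm_eq_abs])
    have hnormC : Summable fun m => ‖Cc m * t ^ m‖ := by
      refine ((FormalMultilinearSeries.ofScalars ℝ Cc).summable_norm_mul_pow hlt).congr
        fun m => ?_
      rw [FormalMultilinearSeries.ofScalars_norm, norm_mul, norm_pow, coe_nnnorm]
    have hnormE : Summable fun m => ‖d ^ m / (m ! : ℝ) * t ^ m‖ := by
      refine (Real.summable_pow_div_factorial (|d * t|)).congr fun m => ?_
      simp only [Real.norm_eq_abs, abs_mul, abs_div, abs_pow, Nat.abs_cast, mul_pow]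
      ring
    have hE : HasSum (fun m => d ^ m / (m ! : ℝ) * t ^ m) (Real.exp (d * t)) := by
      have h1 : (fun m => d ^ m / (m ! : ℝ) * t ^ m) = fun m => (d * t) ^ m / (m ! : ℝ) := by
        funext m; rw [mul_pow]; ring
      rw [h1]
      have h2 := (Real.summable_pow_div_factorial (d * t)).hasSum
      have h3 : Real.exp (d * t) = ∑' m, (d * t) ^ m / (m ! : ℝ) := by
        rw [Real.exp_eq_exp_ℝ, NormedSpace.exp_eq_tsum_div]
      rwa [h3]
    have hmain := hasSum_sum_range_mul_of_summable_norm hnormC hnormE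
    rw [hE.tsum_eq] at hmain
    refine hmain.congr_fun fun m => ?_
    rw [hPn, Finset.sum_mul]
    refine Finset.sum_congr rfl fun i hi => ?_
    have hi' : i ≤ m := Finset.mem_range_succ_iff.mp hi
    have : t ^ i * t ^ (m - i) = t ^ m := by
      rw [← pow_add, Nat.add_sub_cancel' hi']
    rw [← this]; ring
  have hPsum : ∀ t : ℝ, |t| < εm / 2 → Summable (fun m => Pn m * t ^ m) :=
    fun t ht => (hcauchy t ht).summable
  -- equality of the sums on a punctured neighborhood
  have hEq : ∀ t : ℝ, t ≠ 0 → |t| < εm / 2 →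
      (∑' m, A m * t ^ m) = ∑' m, Pn m * t ^ m := by
    intro t hne ht
    have htm : |t| < εm := by linarith
    rw [hfval t hne htm, (hcauchy t ht).tsum_eq, hgval t hne htm]
    have hrpow : c ^ ((r : ℝ) * (x + y) * t) =
        c ^ ((r : ℝ) * x * t) * Real.exp (d * t) := by
      have h1 : (r : ℝ) * (x + y) * t = (r : ℝ) * x * t + (r : ℝ) * y * t := by ring
      rw [h1, Real.rpow_add hc]
      congr 1
      rw [Real.rpow_def_of_pos hc]
      congr 1
      rw [hd]; ring
    rw [hrpow]; ring
  -- conclude A = Pn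
  have hAP : A = Pn := aux_unique A Pn hεm2
    (fun t ht => hAsum t (by linarith))
    hPsum hEq
  have hAPn := congrFun hAP n
  -- unfold and massage into the required form
  have hfact_ne : ((n ! : ℝ)) ≠ 0 := Nat.cast_ne_zero.mpr n.factorial_ne_zero
  have hBn : B c (x + y) n = (n ! : ℝ) * Pn n := by
    have : A n = B c (x + y) n / (n ! : ℝ) := rfl
    rw [this] at hAPn
    field_simp at hAPn
    linarith [hAPn]
  rw [hBn, hPn, Finset.mul_sum]
  refine Finset.sum_congr rfl fun i hi => ?_
  have hi' : i ≤ n := Finset.mem_range_succ_iff.mp hi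
  have hch : ((n.choose i : ℕ) : ℝ) * (i ! : ℝ) * ((n - i)! : ℝ) = (n ! : ℝ) := by
    exact_mod_cast Nat.choose_mul_factorial_mul_factorial hi'
  have hi_ne : ((i ! : ℝ)) ≠ 0 := Nat.cast_ne_zero.mpr i.factorial_ne_zero
  have hni_ne : (((n - i)! : ℝ)) ≠ 0 := Nat.cast_ne_zero.mpr (n - i).factorial_ne_zero
  have hdpow : d ^ (n - i) = ((r : ℝ) * Real.log c) ^ (n - i) * y ^ (n - i) := by
    rw [hd, mul_pow]
  rw [hCc]
  rw [← hch, hdpow]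
  field_simp
end

section
/- (Multiplication formula) For every integer n ≥ 0, every integer r ≥ 1, all integers k_1,…,k_r, all positive reals a, b, c with ab > 1, every real x and every real m, one has B_n^{(k_1,…,k_r)}(m·x;a,b,c) = ∑_{i=0}^{n} C(n,i) (r·ln c)^{n−i} (m−1)^{n−i} x^{n−i} B_i^{(k_1,…,k_r)}(x;a,b,c). -/
open Nat Finset

noncomputable def pSeries (A : ℕ → ℝ) : FormalMultilinearSeries ℝ ℝ ℝ :=
  fun n => ContinuousMultilinearMap.mkPiRing ℝ (Fin n) (A n)

lemma pSeries_coeff (A : ℕ → ℝ) (n : ℕ) : (pSeries A).coeff n = A n := by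
  simp [pSeries, FormalMultilinearSeries.coeff, ContinuousMultilinearMap.mkPiRing_apply]

lemma coeff_zero_of_hasSum_zero (A : ℕ → ℝ) (ε : ℝ) (hε : 0 < ε)
    (h : ∀ t : ℝ, t ≠ 0 → |t| < ε → HasSum (fun n => A n * t ^ n) 0) :
    ∀ n, A n = 0 := by
  set f : ℝ → ℝ := fun t => if t = 0 then A 0 else 0 with hf
  have key : ∀ z w : ℝ, HasSum (fun n => A n * z ^ n) w →
      HasSum (fun n => z ^ n • (pSeries A).coeff n) w := by
    intro z w hw
    have : (fun n => z ^ n • (pSeries A).coeff n) = fun n => A n * z ^ n := by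
      funext n; rw [pSeries_coeff, smul_eq_mul, mul_comm]
    rw [this]; exact hw
  have hfp : HasFPowerSeriesAt f (pSeries A) 0 := by
    rw [hasFPowerSeriesAt_iff]
    filter_upwards [Metric.ball_mem_nhds (0:ℝ) hε] with z hz
    rw [Metric.mem_ball, Real.dist_eq, sub_zero] at hz
    rcases eq_or_ne z 0 with rfl | hz0
    · have h0 : HasSum (fun n => A n * (0:ℝ) ^ n) (A 0) := by
        have := hasSum_single (f := fun n => A n * (0:ℝ) ^ n) 0
          (fun b hb => by simp [zero_pow hb])
        simpa using this
      simpa [hf] using key 0 (A 0) h0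
    · have := key z 0 (h z hz0 hz)
      simpa [hf, hz0] using this
  have hfreq : ∃ᶠ z in nhdsWithin (0:ℝ) {(0:ℝ)}ᶜ, f z = 0 := by
    apply Filter.Eventually.frequently
    filter_upwards [self_mem_nhdsWithin] with z hz
    simp only [Set.mem_compl_iff, Set.mem_singleton_iff] at hz
    simp [hf, hz]
  have hev : ∀ᶠ z in nhds (0:ℝ), f z = 0 :=
    hfp.analyticAt.frequently_zero_iff_eventually_zero.1 hfreq
  have hz : pSeries A = 0 := hfp.eq_zero_of_eventually hev
  intro n
  rw [← pSeries_coeff A n, hz]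
  simp [FormalMultilinearSeries.coeff]


set_option maxHeartbeats 1000000 in
/-- Multiplication formula: `B_n^{(k_1,…,k_r)}(m·x;a,b,c) =
∑_{i=0}^{n} C(n,i) (r ln c)^{n-i} (m-1)^{n-i} x^{n-i} B_i^{(k_1,…,k_r)}(x;a,b,c)`. -/
theorem statement10
    (r : ℕ) (hr : 1 ≤ r) (k : Fin r → ℤ)
    (a b : ℝ) (ha : 0 < a) (hb : 0 < b) (hab : 1 < a * b)
    (B : ℝ → ℝ → ℕ → ℝ)
    (hB : ∀ c : ℝ, 0 < c → ∀ x : ℝ, ∃ ε > 0, ∀ t : ℝ, t ≠ 0 → |t| < ε →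
      HasSum (fun n : ℕ => B c x n * t ^ n / (n ! : ℝ))
        (multiPolylog r k (1 - (a * b) ^ (-t)) / (b ^ t - a ^ (-t)) ^ r *
          c ^ ((r : ℝ) * x * t)))
    (c : ℝ) (hc : 0 < c) (x m : ℝ) (n : ℕ) :
    B c (m * x) n = ∑ i ∈ Finset.range (n + 1),
      (n.choose i : ℝ) * ((r : ℝ) * Real.log c) ^ (n - i) * (m - 1) ^ (n - i) * x ^ (n - i) *
        B c x i := by
  obtain ⟨ε₁, hε₁, H1⟩ := hB c hc (m * x)
  obtain ⟨ε₂, hε₂, H2⟩ := hB c hc x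
  set L : ℝ := (r : ℝ) * Real.log c * (m - 1) * x with hL
  set F : ℝ → ℝ := fun t =>
    multiPolylog r k (1 - (a * b) ^ (-t)) / (b ^ t - a ^ (-t)) ^ r with hF
  set A : ℕ → ℝ := fun n => B c (m * x) n / (n ! : ℝ) -
    ∑ i ∈ Finset.range (n + 1), B c x i * L ^ (n - i) / ((i ! : ℝ) * ((n - i)! : ℝ)) with hA
  set ε : ℝ := min ε₁ ε₂ with hε
  have hεpos : 0 < ε := lt_min hε₁ hε₂
  have key : ∀ t : ℝ, t ≠ 0 → |t| < ε → HasSum (fun n => A n * t ^ n) 0 := by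
    intro t ht htε
    -- the target function value
    have hg : HasSum (fun n => B c x n * t ^ n / (n ! : ℝ)) (F t * c ^ ((r : ℝ) * x * t)) :=
      H2 t ht (htε.trans_le (min_le_right _ _))
    -- absolute summability of g
    have hgnorm : Summable fun n => ‖B c x n * t ^ n / (n ! : ℝ)‖ := by
      set t' : ℝ := (|t| + ε) / 2 with ht'
      have ht'pos : 0 < t' := by positivity
      have htt' : |t| < t' := by rw [ht']; linarith
      have ht'ε : t' < ε := by rw [ht']; linarith
      have hsum' : Summable fun n => B c x n * t' ^ n / (n ! : ℝ) :=
        (H2 t' (ne_of_gt ht'pos) (by rw [abs_of_pos ht'pos]; exact ht'ε.trans_le (min_le_right _ _))).summable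
      obtain ⟨M, hM⟩ := (hsum'.tendsto_atTop_zero.norm.bddAbove_range).exists_ge 0
      rcases hM with ⟨hM0, hM⟩
      apply Summable.of_nonneg_of_le (fun n => norm_nonneg _)
        (f := fun n => M * (|t| / t') ^ n)
      · intro n
        have h1 : B c x n * t ^ n / (n ! : ℝ) = (B c x n * t' ^ n / (n ! : ℝ)) * (t / t') ^ n := by
          field_simp
          rw [mul_assoc, ← mul_pow, mul_div_assoc', mul_div_cancel_left₀ t ht'pos.ne']
        rw [h1, norm_mul]
        have h2 : ‖B c x n * t' ^ n / (n ! : ℝ)‖ ≤ M := by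
          apply hM
          exact Set.mem_range_self n
        have h3 : ‖(t / t') ^ n‖ = (|t| / t') ^ n := by
          rw [norm_pow, Real.norm_eq_abs, abs_div, abs_of_pos ht'pos]
        rw [h3]
        exact mul_le_mul_of_nonneg_right h2 (by positivity)
      · exact (summable_geometric_of_lt_one (by positivity)
          ((div_lt_one ht'pos).2 htt')).mul_left M
    -- exponential series
    have he : HasSum (fun n => (L * t) ^ n / (n ! : ℝ)) (Real.exp (L * t)) := by
      rw [Real.exp_eq_exp_ℝ]
      exact NormedSpace.expSeries_div_hasSum_exp (L * t)
    have henorm : Summable fun n => ‖(L * t) ^ n / (n ! : ℝ)‖ := by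
      have := Real.summable_pow_div_factorial |L * t|
      apply this.congr
      intro n
      simp [Real.norm_eq_abs, abs_pow, abs_mul]
    -- Cauchy product
    have hprod : HasSum
        (fun n => ∑ i ∈ Finset.range (n + 1),
          (B c x i * t ^ i / (i ! : ℝ)) * ((L * t) ^ (n - i) / ((n - i)! : ℝ)))
        ((F t * c ^ ((r : ℝ) * x * t)) * Real.exp (L * t)) := by
      have hsummable := (summable_norm_sum_mul_range_of_summable_norm hgnorm henorm).of_norm
      have htsum := tsum_mul_tsum_eq_tsum_sum_range_of_summable_norm hgnorm henorm
      rw [hg.tsum_eq, he.tsum_eq] at htsum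
      rw [htsum]
      exact hsummable.hasSum
    -- rewrite the Cauchy product terms
    have hterm : ∀ nn : ℕ, (∑ i ∈ Finset.range (nn + 1),
          (B c x i * t ^ i / (i ! : ℝ)) * ((L * t) ^ (nn - i) / ((nn - i)! : ℝ))) =
        (∑ i ∈ Finset.range (nn + 1),
          B c x i * L ^ (nn - i) / ((i ! : ℝ) * ((nn - i)! : ℝ))) * t ^ nn := by
      intro nn
      rw [Finset.sum_mul]
      apply Finset.sum_congr rfl
      intro i hi
      have hin : i ≤ nn := Finset.mem_range_succ_iff.mp hi
      have hpow : t ^ i * t ^ (nn - i) = t ^ nn := by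
        rw [← pow_add]; congr 1; omega
      have hfi : ((i ! : ℝ)) ≠ 0 := Nat.cast_ne_zero.2 (Nat.factorial_ne_zero i)
      have hfni : (((nn - i)! : ℝ)) ≠ 0 := Nat.cast_ne_zero.2 (Nat.factorial_ne_zero _)
      rw [mul_pow L t]
      field_simp
      rw [← hpow]
      ring
    -- rewrite the target
    have htarget : F t * c ^ ((r : ℝ) * (m * x) * t) =
        (F t * c ^ ((r : ℝ) * x * t)) * Real.exp (L * t) := by
      rw [Real.rpow_def_of_pos hc, Real.rpow_def_of_pos hc,
        mul_assoc (F t), ← Real.exp_add]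
      congr 1
      rw [hL]; ring
    have h1 : HasSum (fun nn => (B c (m * x) nn / (nn ! : ℝ)) * t ^ nn)
        ((F t * c ^ ((r : ℝ) * x * t)) * Real.exp (L * t)) := by
      rw [← htarget]
      have heq : (fun nn => (B c (m * x) nn / (nn ! : ℝ)) * t ^ nn) =
          fun nn => B c (m * x) nn * t ^ nn / (nn ! : ℝ) := by
        funext nn; ring
      rw [heq]
      exact H1 t ht (htε.trans_le (min_le_left _ _))
    have h2 : HasSum (fun nn => (∑ i ∈ Finset.range (nn + 1),
          B c x i * L ^ (nn - i) / ((i ! : ℝ) * ((nn - i)! : ℝ))) * t ^ nn)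
        ((F t * c ^ ((r : ℝ) * x * t)) * Real.exp (L * t)) := by
      have heq : (fun nn => ∑ i ∈ Finset.range (nn + 1),
          (B c x i * t ^ i / (i ! : ℝ)) * ((L * t) ^ (nn - i) / ((nn - i)! : ℝ))) =
          fun nn => (∑ i ∈ Finset.range (nn + 1),
            B c x i * L ^ (nn - i) / ((i ! : ℝ) * ((nn - i)! : ℝ))) * t ^ nn :=
        funext hterm
      rw [← heq]
      exact hprod
    have := h1.sub h2
    rw [sub_self] at this
    apply this.congr_fun
    intro nn
    rw [hA, sub_mul]
  have hzero := coeff_zero_of_hasSum_zero A ε hεpos key n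
  rw [hA, sub_eq_zero] at hzero
  have hfn : ((n ! : ℝ)) ≠ 0 := Nat.cast_ne_zero.2 (Nat.factorial_ne_zero n)
  have hB' : B c (m * x) n = (∑ i ∈ Finset.range (n + 1),
      B c x i * L ^ (n - i) / ((i ! : ℝ) * ((n - i)! : ℝ))) * (n ! : ℝ) := by
    rw [← hzero]; field_simp
  rw [hB', Finset.sum_mul]
  apply Finset.sum_congr rfl
  intro i hi
  have hin : i ≤ n := Finset.mem_range_succ_iff.mp hi
  have hLp : L ^ (n - i) = ((r : ℝ) * Real.log c) ^ (n - i) *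
      (m - 1) ^ (n - i) * x ^ (n - i) := by
    rw [hL, mul_pow, mul_pow]
  rw [Nat.cast_choose ℝ hin, hLp]
  have hfi : ((i ! : ℝ)) ≠ 0 := Nat.cast_ne_zero.2 (Nat.factorial_ne_zero i)
  have hfni : (((n - i)! : ℝ)) ≠ 0 := Nat.cast_ne_zero.2 (Nat.factorial_ne_zero _)
  field_simp
end
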